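/- arXiv:1706.00219 — 12 statements merged into one kernel-verified Lean document; each statement's English description precedes it below -/
import Mathlib

section
/- For every instance with n ≥ 2 demand levels there exists a non-trivial pure Nash equilibrium, i.e., a pair (p,q) of nonnegative prices with p ∈ BR(q), q ∈ BR(p) and p + q ≤ v_1. -/
open scoped Classical

/-- The demand function induced by an instance with `n` demand levels,
values `v` and demands `d` (indices `1,…,n`):
`demand n v d x = d i` for the largest index `i ∈ {1,…,n}` with `x ≤ v i`,
and `0` if there is no such index. -/
noncomputable def demand (n : ℕ) (v d : ℕ → ℝ) (x : ℝ) : ℝ :=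
  if h : ((Finset.Icc 1 n).filter (fun i => x ≤ v i)).Nonempty then
    d (((Finset.Icc 1 n).filter (fun i => x ≤ v i)).max' h)
  else 0

/-- Total revenue at total price `x`. -/
noncomputable def rev (n : ℕ) (v d : ℕ → ℝ) (x : ℝ) : ℝ := x * demand n v d x

/-- Social welfare at total price `x` (with the convention `d 0 = 0`). -/
noncomputable def welfare (n : ℕ) (v d : ℕ → ℝ) (x : ℝ) : ℝ :=
  ∑ i ∈ (Finset.Icc 1 n).filter (fun i => x ≤ v i),
    v i * (d i - if 1 < i then d (i - 1) else 0)

/-- `InBR n v d q p` : `p` is a best response to the price `q` of the other seller. -/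
def InBR (n : ℕ) (v d : ℕ → ℝ) (q p : ℝ) : Prop :=
  0 ≤ p ∧ ∀ p', 0 ≤ p' → p' * demand n v d (p' + q) ≤ p * demand n v d (p + q)

/-- `(p, q)` is a pure Nash equilibrium. -/
def IsNE (n : ℕ) (v d : ℕ → ℝ) (p q : ℝ) : Prop :=
  0 ≤ p ∧ 0 ≤ q ∧ InBR n v d q p ∧ InBR n v d p q

/-- A valid instance with `n ≥ 2` demand levels: positive values strictly
decreasing in the index, positive demands strictly increasing in the index. -/
def ValidInstance (n : ℕ) (v d : ℕ → ℝ) : Prop :=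
  2 ≤ n ∧ 0 < v n ∧ (∀ i j, 1 ≤ i → i < j → j ≤ n → v j < v i) ∧
    0 < d 1 ∧ (∀ i j, 1 ≤ i → i < j → j ≤ n → d i < d j)

/-- Key combinatorial lemma: there is an index `i` such that for every `j`,
`(v j - v i / 2) * d j ≤ (v i / 2) * d i`. -/
lemma aux_good (n : ℕ) (v d : ℕ → ℝ) (h : ValidInstance n v d) :
    ∃ i ∈ Finset.Icc 1 n, ∀ j ∈ Finset.Icc 1 n,
      (v j - v i / 2) * d j ≤ v i / 2 * d i := by
  obtain ⟨hn, hvn, hvdec, hd1, hdinc⟩ := h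
  have h1N : (1 : ℕ) ∈ Finset.Icc 1 n := Finset.mem_Icc.mpr ⟨le_refl 1, le_trans one_le_two hn⟩
  have hdpos : ∀ k ∈ Finset.Icc 1 n, 0 < d k := by
    intro k hk
    have hk' := Finset.mem_Icc.mp hk
    rcases eq_or_lt_of_le hk'.1 with h1 | h1
    · rwa [← h1]
    · exact lt_trans hd1 (hdinc 1 k le_rfl h1 hk'.2)
  have hvpos : ∀ k ∈ Finset.Icc 1 n, 0 < v k := by
    intro k hk
    have hk' := Finset.mem_Icc.mp hk
    rcases eq_or_lt_of_le hk'.2 with h1 | h1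
    · rwa [h1]
    · exact lt_trans hvn (hvdec k n hk'.1 h1 le_rfl)
  have hdle : ∀ j k, j ∈ Finset.Icc 1 n → k ∈ Finset.Icc 1 n → v j ≤ v k → d k ≤ d j := by
    intro j k hj hk hvjk
    have hj' := Finset.mem_Icc.mp hj
    have hk' := Finset.mem_Icc.mp hk
    rcases lt_trichotomy k j with hlt | heq | hgt
    · exact le_of_lt (hdinc k j hk'.1 hlt hj'.2)
    · rw [heq]
    · exact absurd hvjk (not_le.mpr (hvdec j k hj'.1 hgt hk'.2))
  set Good : ℕ → Prop := fun i =>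
    ∀ j ∈ Finset.Icc 1 n, v i ≤ v j → (v j - v i / 2) * d j ≤ v i / 2 * d i with hGood
  set F : ℕ → ℝ := fun i => if Good i then v i * d i else (-1) with hF
  have hGood1 : Good 1 := by
    intro j hj hvj
    have hj' := Finset.mem_Icc.mp hj
    have hj1 : j = 1 := by
      by_contra hne
      have h1j : 1 < j := lt_of_le_of_ne hj'.1 (Ne.symm hne)
      exact absurd hvj (not_le.mpr (hvdec 1 j le_rfl h1j hj'.2))
    subst hj1
    have heq : v 1 - v 1 / 2 = v 1 / 2 := by ring
    rw [heq]
  have hF1 : F 1 = v 1 * d 1 := if_pos hGood1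
  have hF1pos : 0 < F 1 := by
    rw [hF1]
    exact mul_pos (hvpos 1 h1N) (hdpos 1 h1N)
  obtain ⟨i, hiN, himax⟩ := Finset.exists_max_image (Finset.Icc 1 n) F ⟨1, h1N⟩
  have hFipos : 0 < F i := lt_of_lt_of_le hF1pos (himax 1 h1N)
  have hGoodi : Good i := by
    by_contra hng
    rw [show F i = -1 from if_neg hng] at hFipos
    linarith
  have hFi : F i = v i * d i := if_pos hGoodi
  refine ⟨i, hiN, ?_⟩
  by_contra hbad
  push_neg at hbad
  obtain ⟨j0, hj0, hj0bad⟩ := hbad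
  obtain ⟨j, hjN, hjmax⟩ := Finset.exists_max_image (Finset.Icc 1 n)
      (fun j => (v j - v i / 2) * d j) ⟨j0, hj0⟩
  have hjval : v i / 2 * d i < (v j - v i / 2) * d j :=
    lt_of_lt_of_le hj0bad (hjmax j0 hj0)
  have hvji : v j < v i := by
    by_contra hle
    push_neg at hle
    exact absurd (hGoodi j hjN hle) (not_le.mpr hjval)
  have hdposj : 0 < d j := hdpos j hjN
  have hGoodj : Good j := by
    intro k hkN hvjk
    have hdkj : d k ≤ d j := hdle j k hjN hkN hvjk
    have hkmax : (v k - v i / 2) * d k ≤ (v j - v i / 2) * d j := hjmax k hkN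
    have hdposk : 0 ≤ d k := le_of_lt (hdpos k hkN)
    nlinarith [hvji, hdkj, hkmax]
  have hgt : v i * d i < v j * d j := by
    have hdipos : 0 < d i := hdpos i hiN
    nlinarith [hjval, hvji, hdposj, hdipos]
  have : F j ≤ F i := himax j hjN
  rw [hFi, show F j = v j * d j from if_pos hGoodj] at this
  linarith

lemma demand_at_value (n : ℕ) (v d : ℕ → ℝ)
    (hvdec : ∀ i j, 1 ≤ i → i < j → j ≤ n → v j < v i)
    (i : ℕ) (hi : i ∈ Finset.Icc 1 n) : demand n v d (v i) = d i := by
  unfold demand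
  have hmem : i ∈ (Finset.Icc 1 n).filter (fun j => v i ≤ v j) := by
    simp only [Finset.mem_filter]
    exact ⟨hi, le_refl _⟩
  have hne : ((Finset.Icc 1 n).filter (fun j => v i ≤ v j)).Nonempty := ⟨i, hmem⟩
  rw [dif_pos hne]
  congr 1
  set m := ((Finset.Icc 1 n).filter (fun j => v i ≤ v j)).max' hne with hm
  have h1 : i ≤ m := Finset.le_max' _ i hmem
  have hmmem := Finset.max'_mem _ hne
  rw [← hm] at hmmem
  simp only [Finset.mem_filter, Finset.mem_Icc] at hmmem
  have h2 : m ≤ i := by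
    by_contra hlt
    push_neg at hlt
    have hi' := Finset.mem_Icc.mp hi
    exact absurd hmmem.2 (not_le.mpr (hvdec i m hi'.1 hlt hmmem.1.2))
  omega

/-- For every instance with `n ≥ 2` demand levels there exists a non-trivial
pure Nash equilibrium. -/
theorem stmt_0 (n : ℕ) (v d : ℕ → ℝ) (h : ValidInstance n v d) :
    ∃ p q : ℝ, IsNE n v d p q ∧ p + q ≤ v 1 := by
  obtain ⟨i, hiN, hgood⟩ := aux_good n v d h
  obtain ⟨hn, hvn, hvdec, hd1, hdinc⟩ := h
  have hi' := Finset.mem_Icc.mp hiN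
  have hvipos : 0 < v i := by
    rcases eq_or_lt_of_le hi'.2 with h1 | h1
    · rwa [h1]
    · exact lt_trans hvn (hvdec i n hi'.1 h1 le_rfl)
  have hdipos : 0 < d i := by
    rcases eq_or_lt_of_le hi'.1 with h1 | h1
    · rwa [← h1]
    · exact lt_trans hd1 (hdinc 1 i le_rfl h1 hi'.2)
  set c := v i / 2 with hc
  have hc0 : 0 ≤ c := by positivity
  have hcc : c + c = v i := by rw [hc]; ring
  have hdval : demand n v d (c + c) = d i := by
    rw [hcc]; exact demand_at_value n v d hvdec i hiN
  have hBR : InBR n v d c c := by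
    refine ⟨hc0, ?_⟩
    intro p' hp'
    rw [hdval]
    unfold demand
    by_cases hne : ((Finset.Icc 1 n).filter (fun j => p' + c ≤ v j)).Nonempty
    · rw [dif_pos hne]
      set k := ((Finset.Icc 1 n).filter (fun j => p' + c ≤ v j)).max' hne with hk
      have hkmem := Finset.max'_mem _ hne
      rw [← hk] at hkmem
      simp only [Finset.mem_filter] at hkmem
      have hkN := hkmem.1
      have hk' := Finset.mem_Icc.mp hkN
      have hdkpos : 0 ≤ d k := by
        rcases eq_or_lt_of_le hk'.1 with h1 | h1
        · rw [← h1]; exact le_of_lt hd1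
        · exact le_of_lt (lt_trans hd1 (hdinc 1 k le_rfl h1 hk'.2))
      have hple : p' ≤ v k - c := by linarith [hkmem.2]
      calc p' * d k ≤ (v k - c) * d k := mul_le_mul_of_nonneg_right hple hdkpos
        _ ≤ c * d i := hgood k hkN
    · rw [dif_neg hne]
      have : p' * 0 = 0 := by ring
      rw [this]
      positivity
  refine ⟨c, c, ⟨hc0, hc0, hBR, hBR⟩, ?_⟩
  rw [hcc]
  rcases eq_or_lt_of_le hi'.1 with h1 | h1
  · rw [← h1]
  · exact le_of_lt (hvdec 1 i le_rfl h1 hi'.2)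
end

section
/- If (p,q) is a pure Nash equilibrium, then for every x with min(p,q) ≤ x ≤ max(p,q) the pair (x, p+q−x) is also a pure Nash equilibrium. In particular, ((p+q)/2, (p+q)/2) is a pure Nash equilibrium. -/
open scoped Classical

lemma demand_nonneg (n : ℕ) (v d : ℕ → ℝ) (h : ValidInstance n v d) (x : ℝ) :
    0 ≤ demand n v d x := by
  unfold demand
  split_ifs with hne
  · have hmem := Finset.max'_mem _ hne
    rw [Finset.mem_filter, Finset.mem_Icc] at hmem
    set i := ((Finset.Icc 1 n).filter (fun i => x ≤ v i)).max' hne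
    rcases eq_or_lt_of_le hmem.1.1 with he | hl
    · rw [← he]; exact le_of_lt h.2.2.2.1
    · exact le_of_lt (lt_trans h.2.2.2.1 (h.2.2.2.2 1 i le_rfl hl hmem.1.2))
  · exact le_refl 0

lemma claim_aux (n : ℕ) (v d : ℕ → ℝ) (h : ValidInstance n v d) (p q : ℝ)
    (hp : 0 ≤ p) (hq : 0 ≤ q) (hbr : InBR n v d q p) (t : ℝ) :
    (t - q) * demand n v d t ≤ p * demand n v d (p + q) := by
  rcases le_or_gt q t with hle | hlt
  · have := hbr.2 (t - q) (by linarith)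
    simpa [sub_add_cancel] using this
  · have h1 : (t - q) * demand n v d t ≤ 0 :=
      mul_nonpos_of_nonpos_of_nonneg (by linarith) (demand_nonneg n v d h t)
    exact h1.trans (mul_nonneg hp (demand_nonneg n v d h (p + q)))

lemma br_convex (n : ℕ) (v d : ℕ → ℝ) (h : ValidInstance n v d) (p q : ℝ)
    (hpq : IsNE n v d p q) (l x : ℝ) (hl0 : 0 ≤ l) (hl1 : l ≤ 1)
    (hx : x = l * p + (1 - l) * q) :
    InBR n v d (p + q - x) x := by
  obtain ⟨hp, hq, hbp, hbq⟩ := hpq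
  constructor
  · nlinarith
  · intro p' hp'
    have hsum : x + (p + q - x) = p + q := by ring
    rw [hsum]
    set t := p' + (p + q - x) with ht
    have hA := claim_aux n v d h p q hp hq hbp t
    have hB := claim_aux n v d h q p hq hp hbq t
    rw [add_comm q p] at hB
    have hD := demand_nonneg n v d h t
    have hS := demand_nonneg n v d h (p + q)
    have hp'eq : p' = l * (t - q) + (1 - l) * (t - p) := by rw [ht, hx]; ring
    rw [hp'eq]
    have h1 := mul_le_mul_of_nonneg_left hA hl0
    have h2 := mul_le_mul_of_nonneg_left hB (by linarith : (0:ℝ) ≤ 1 - l)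
    nlinarith

/-- The set of equilibria with a given total price is convex: if `(p,q)` is a
pure Nash equilibrium then so is `(x, p+q-x)` for every `x` between `p` and
`q`; in particular `((p+q)/2, (p+q)/2)` is a pure Nash equilibrium. -/
theorem stmt_2 (n : ℕ) (v d : ℕ → ℝ) (h : ValidInstance n v d)
    (p q : ℝ) (hpq : IsNE n v d p q) :
    (∀ x : ℝ, min p q ≤ x → x ≤ max p q → IsNE n v d x (p + q - x)) ∧
    IsNE n v d ((p + q) / 2) ((p + q) / 2) := by
  obtain ⟨hp, hq, hbp, hbq⟩ := hpq
  have hNE : IsNE n v d p q := ⟨hp, hq, hbp, hbq⟩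
  have hNE' : IsNE n v d q p := ⟨hq, hp, hbq, hbp⟩
  have main : ∀ x : ℝ, min p q ≤ x → x ≤ max p q → IsNE n v d x (p + q - x) := by
    intro x hx1 hx2
    have hlam : ∃ l : ℝ, 0 ≤ l ∧ l ≤ 1 ∧ x = l * p + (1 - l) * q := by
      rcases lt_trichotomy p q with hlt | he | hgt
      · have h1 : p ≤ x := le_trans (le_of_eq (min_eq_left hlt.le).symm) hx1
        have h2 : x ≤ q := le_trans hx2 (le_of_eq (max_eq_right hlt.le))
        refine ⟨(x - q) / (p - q), ?_, ?_, ?_⟩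
        · rw [div_nonneg_iff]; right; constructor <;> linarith
        · rw [div_le_one_iff]; right; right; exact ⟨by linarith, by linarith⟩
        · have hne : p - q ≠ 0 := by intro hc; linarith
          field_simp
          ring
      · have hxp : x = p := le_antisymm (by simpa [he] using hx2) (by simpa [he] using hx1)
        exact ⟨1, zero_le_one, le_rfl, by rw [hxp]; ring⟩
      · have h1 : q ≤ x := le_trans (le_of_eq (min_eq_right hgt.le).symm) hx1
        have h2 : x ≤ p := le_trans hx2 (le_of_eq (max_eq_left hgt.le))
        refine ⟨(x - q) / (p - q), ?_, ?_, ?_⟩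
        · apply div_nonneg <;> linarith
        · rw [div_le_one (by linarith)]; linarith
        · have hne : p - q ≠ 0 := by intro hc; linarith
          field_simp
          ring
    obtain ⟨l, hl0, hl1, hxl⟩ := hlam
    have b1 : InBR n v d (p + q - x) x := br_convex n v d h p q hNE l x hl0 hl1 hxl
    have hyl : p + q - x = l * q + (1 - l) * p := by rw [hxl]; ring
    have b2 : InBR n v d (q + p - (p + q - x)) (p + q - x) :=
      br_convex n v d h q p hNE' l (p + q - x) hl0 hl1 hyl
    have heq : q + p - (p + q - x) = x := by ring
    rw [heq] at b2
    exact ⟨b1.1, b2.1, b1, b2⟩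
  refine ⟨main, ?_⟩
  have hmin : min p q ≤ (p + q) / 2 := by
    rcases le_total p q with hle | hle
    · rw [min_eq_left hle]; linarith
    · rw [min_eq_right hle]; linarith
  have hmax : (p + q) / 2 ≤ max p q := by
    rcases le_total p q with hle | hle
    · rw [max_eq_right hle]; linarith
    · rw [max_eq_left hle]; linarith
  have := main ((p + q) / 2) hmin hmax
  have heq : p + q - (p + q) / 2 = (p + q) / 2 := by ring
  rwa [heq] at this
end

section
/- Let p* ≥ 0 be the minimal monopolist price, i.e., R(p*) ≥ R(x) for all x ≥ 0, and p* ≤ x for every x ≥ 0 with R(x) = R(p*). Then every pure Nash equilibrium (p,q) satisfies p + q ≥ p*. -/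
open scoped Classical

/-- The total price in any pure Nash equilibrium is at least the minimal
monopolist price. -/
theorem stmt_4 (n : ℕ) (v d : ℕ → ℝ) (h : ValidInstance n v d)
    (pstar : ℝ) (hstar0 : 0 ≤ pstar)
    (hmon : ∀ x : ℝ, 0 ≤ x → rev n v d x ≤ rev n v d pstar)
    (hmin : ∀ x : ℝ, 0 ≤ x → rev n v d x = rev n v d pstar → pstar ≤ x) :
    ∀ p q : ℝ, IsNE n v d p q → pstar ≤ p + q := by
  intro p q hne
  by_contra hcon
  push_neg at hcon
  obtain ⟨hp, hq, ⟨_, hbrp⟩, ⟨_, hbrq⟩⟩ := hne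
  have hpq : 0 ≤ p + q := add_nonneg hp hq
  have hlt : rev n v d (p + q) < rev n v d pstar := by
    rcases lt_or_eq_of_le (hmon (p + q) hpq) with h1 | h1
    · exact h1
    · exact absurd (hmin (p + q) hpq h1) (not_le.mpr hcon)
  have h1 : (pstar - q) * demand n v d pstar ≤ p * demand n v d (p + q) := by
    have := hbrp (pstar - q) (by linarith)
    rwa [sub_add_cancel] at this
  have h2 : (pstar - p) * demand n v d pstar ≤ q * demand n v d (p + q) := by
    have := hbrq (pstar - p) (by linarith)
    rwa [sub_add_cancel, add_comm q p] at this
  have hdn := demand_nonneg n v d h pstar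
  have hkey : (pstar - (p + q)) * demand n v d pstar < 0 := by
    have hr : rev n v d (p + q) = p * demand n v d (p + q) + q * demand n v d (p + q) := by
      rw [rev, add_mul]
    have hr2 : rev n v d pstar = pstar * demand n v d pstar := rfl
    nlinarith
  nlinarith
end

section
/- (Monotonicity Lemma.) Let x and y be prices with 0 ≤ x < y ≤ v_1, let br_x ∈ BR(x) and br_y ∈ BR(y). Then y + br_y ≥ x + br_x. -/
open scoped Classical

lemma d_pos_aux (n : ℕ) (v d : ℕ → ℝ) (h : ValidInstance n v d) :
    ∀ i, 1 ≤ i → i ≤ n → 0 < d i := by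
  obtain ⟨hn, _, _, hd1, hdmono⟩ := h
  intro i h1 hn'
  rcases eq_or_lt_of_le h1 with h | h
  · rwa [← h]
  · exact hd1.trans (hdmono 1 i le_rfl h hn')

lemma demand_pos_aux (n : ℕ) (v d : ℕ → ℝ) (h : ValidInstance n v d) (z : ℝ)
    (hz : z ≤ v 1) : 0 < demand n v d z := by
  have hne : ((Finset.Icc 1 n).filter (fun i => z ≤ v i)).Nonempty := by
    refine ⟨1, ?_⟩
    simp only [Finset.mem_filter, Finset.mem_Icc]
    exact ⟨⟨le_rfl, le_trans one_le_two h.1⟩, hz⟩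
  rw [demand, dif_pos hne]
  have hmem := Finset.max'_mem _ hne
  simp only [Finset.mem_filter, Finset.mem_Icc] at hmem
  exact d_pos_aux n v d h _ hmem.1.1 hmem.1.2

lemma demand_nonneg_aux (n : ℕ) (v d : ℕ → ℝ) (h : ValidInstance n v d) (z : ℝ) :
    0 ≤ demand n v d z := by
  rw [demand]
  split_ifs with hne
  · have hmem := Finset.max'_mem _ hne
    simp only [Finset.mem_filter, Finset.mem_Icc] at hmem
    exact le_of_lt (d_pos_aux n v d h _ hmem.1.1 hmem.1.2)
  · exact le_refl 0

lemma demand_anti_aux (n : ℕ) (v d : ℕ → ℝ) (h : ValidInstance n v d) {z z' : ℝ}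
    (hzz : z ≤ z') : demand n v d z' ≤ demand n v d z := by
  by_cases h' : ((Finset.Icc 1 n).filter (fun i => z' ≤ v i)).Nonempty
  · have hsub : ((Finset.Icc 1 n).filter (fun i => z' ≤ v i)) ⊆
        ((Finset.Icc 1 n).filter (fun i => z ≤ v i)) := by
      intro i hi
      simp only [Finset.mem_filter] at hi ⊢
      exact ⟨hi.1, le_trans hzz hi.2⟩
    have hne : ((Finset.Icc 1 n).filter (fun i => z ≤ v i)).Nonempty := h'.mono hsub
    rw [demand, demand, dif_pos h', dif_pos hne]
    have hle := Finset.max'_subset h' hsub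
    have hm1 := Finset.max'_mem _ h'
    have hm2 := Finset.max'_mem _ hne
    simp only [Finset.mem_filter, Finset.mem_Icc] at hm1 hm2
    rcases eq_or_lt_of_le hle with heq | hlt
    · rw [heq]
    · exact le_of_lt ((h.2.2.2.2) _ _ hm1.1.1 hlt hm2.1.2)
  · rw [demand, dif_neg h']
    exact demand_nonneg_aux n v d h z

/-- Monotonicity Lemma: the total price after a best response is monotone
non-decreasing in the price being responded to. -/
theorem stmt_5 (n : ℕ) (v d : ℕ → ℝ) (h : ValidInstance n v d)
    (x y brx bry : ℝ) (hx : 0 ≤ x) (hxy : x < y) (hy : y ≤ v 1)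
    (hbrx : InBR n v d x brx) (hbry : InBR n v d y bry) :
    x + brx ≤ y + bry := by
  by_contra hcon
  push_neg at hcon
  obtain ⟨hbrx0, hbrxopt⟩ := hbrx
  obtain ⟨hbry0, hbryopt⟩ := hbry
  rw [add_comm brx x] at hbrxopt
  rw [add_comm bry y] at hbryopt
  -- A > 0
  have hApos : 0 < brx * demand n v d (x + brx) := by
    have h1 : 0 ≤ v 1 - x := by linarith
    have hth := hbrxopt (v 1 - x) h1
    have hv1 : v 1 - x + x = v 1 := by ring
    rw [hv1] at hth
    have hd1 : 0 < demand n v d (v 1) := demand_pos_aux n v d h _ le_rfl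
    have hpos : 0 < (v 1 - x) * demand n v d (v 1) := by
      apply mul_pos _ hd1; linarith
    linarith
  have hA0 : 0 < demand n v d (x + brx) := by
    rcases mul_pos_iff.mp hApos with ⟨_, h2⟩ | ⟨h1, _⟩
    · exact h2
    · linarith
  -- ineq 1
  have hp1 : 0 ≤ brx + x - y := by linarith
  have hi1 := hbryopt (brx + x - y) hp1
  rw [show brx + x - y + y = x + brx by ring] at hi1
  -- ineq 2
  have hp2 : 0 ≤ bry + y - x := by linarith
  have hi2 := hbrxopt (bry + y - x) hp2
  rw [show bry + y - x + x = y + bry by ring] at hi2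
  have hAB : demand n v d (x + brx) ≤ demand n v d (y + bry) :=
    demand_anti_aux n v d h (le_of_lt hcon)
  have hBA : demand n v d (y + bry) ≤ demand n v d (x + brx) := by nlinarith
  have hABeq : demand n v d (x + brx) = demand n v d (y + bry) := le_antisymm hAB hBA
  rw [← hABeq] at hi1
  nlinarith
end

section
/- (Slow convergence.) Fix 0 < ε < 1/2 and consider the instance with n = 2 demand levels given by v_1 = 1, v_2 = 1 − ε, d_1 = 1, d_2 = 1/(1 − 2ε). For every integer m ≥ 0 with m + 1 < 1/(2ε): (a) the unique best response to the price m·ε is 1 − (m+1)·ε, i.e. BR(m·ε) = {1 − (m+1)·ε}; and (b) the unique best response to the price 1 − (m+1)·ε is (m+1)·ε, i.e. BR(1 − (m+1)·ε) = {(m+1)·ε}. (Hence the alternating best-response dynamics starting from prices (0,0) requires each seller to update his price at least ⌊1/(2ε)⌋ − 1 = W − 1 times before reaching an equilibrium, where W = d_2/(d_2 − d_1) = 1/(2ε).) -/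
open scoped Classical

lemma demand_two (v d : ℕ → ℝ) (hvv : v 2 ≤ v 1) (x : ℝ) :
    demand 2 v d x = if x ≤ v 2 then d 2 else if x ≤ v 1 then d 1 else 0 := by
  unfold demand
  by_cases h2 : x ≤ v 2
  · have h1 : x ≤ v 1 := h2.trans hvv
    have hf : (Finset.Icc 1 2).filter (fun i => x ≤ v i) = {1, 2} := by
      rw [Finset.filter_true_of_mem, (by rfl : Finset.Icc 1 2 = ({1,2} : Finset ℕ))]
      intro i hi
      simp only [Finset.mem_Icc] at hi
      obtain ⟨hia, hib⟩ := hi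
      interval_cases i <;> assumption
    rw [hf, dif_pos ⟨1, by simp⟩]
    have hmax : ({1, 2} : Finset ℕ).max' ⟨1, by simp⟩ = 2 := by
      apply le_antisymm
      · apply Finset.max'_le
        intro y hy
        simp only [Finset.mem_insert, Finset.mem_singleton] at hy
        omega
      · exact Finset.le_max' _ 2 (by simp)
    rw [hmax, if_pos h2]
  · by_cases h1 : x ≤ v 1
    · have hf : (Finset.Icc 1 2).filter (fun i => x ≤ v i) = {1} := by
        ext i
        simp only [Finset.mem_filter, Finset.mem_Icc, Finset.mem_singleton]
        constructor
        · rintro ⟨⟨ha, hb⟩, hx⟩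
          interval_cases i
          · rfl
          · exact absurd hx h2
        · rintro rfl; exact ⟨⟨le_refl 1, by norm_num⟩, h1⟩
      rw [hf, dif_pos ⟨1, by simp⟩, Finset.max'_singleton, if_neg h2, if_pos h1]
    · have hf : (Finset.Icc 1 2).filter (fun i => x ≤ v i) = ∅ := by
        apply Finset.filter_false_of_mem
        intro i hi
        simp only [Finset.mem_Icc] at hi
        obtain ⟨hia, hib⟩ := hi
        interval_cases i <;> assumption
      rw [hf, dif_neg (by simp), if_neg h2, if_neg h1]

lemma br_unique (v d : ℕ → ℝ) (q t : ℝ) (ht0 : 0 ≤ t)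
    (hstrict : ∀ p, 0 ≤ p → p ≠ t →
      p * demand 2 v d (p + q) < t * demand 2 v d (t + q)) :
    ∀ p, InBR 2 v d q p ↔ p = t := by
  intro p
  constructor
  · rintro ⟨hp0, hbr⟩
    by_contra hne
    have h1 := hbr t ht0
    have h2 := hstrict p hp0 hne
    linarith
  · intro hpe
    rw [hpe]
    refine ⟨ht0, fun p' hp' => ?_⟩
    by_cases h : p' = t
    · rw [h]
    · exact (hstrict p' hp' h).le

/-- Slow convergence: in the instance `v₁ = 1`, `v₂ = 1 - ε`, `d₁ = 1`,
`d₂ = 1/(1-2ε)`, for every `m` with `m + 1 < 1/(2ε)` the unique best response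
to `m·ε` is `1 - (m+1)·ε`, and the unique best response to `1 - (m+1)·ε`
is `(m+1)·ε`. -/
theorem stmt_7 (ε : ℝ) (hε0 : 0 < ε) (hε : ε < 1 / 2)
    (v d : ℕ → ℝ) (hv1 : v 1 = 1) (hv2 : v 2 = 1 - ε)
    (hd1 : d 1 = 1) (hd2 : d 2 = 1 / (1 - 2 * ε)) :
    ∀ m : ℕ, (m : ℝ) + 1 < 1 / (2 * ε) →
      (∀ p : ℝ, InBR 2 v d ((m : ℝ) * ε) p ↔ p = 1 - ((m : ℝ) + 1) * ε) ∧
      (∀ p : ℝ, InBR 2 v d (1 - ((m : ℝ) + 1) * ε) p ↔ p = ((m : ℝ) + 1) * ε) := by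
  intro m hm
  have h2ε : 0 < 1 - 2 * ε := by linarith
  have hm0 : (0 : ℝ) ≤ (m : ℝ) := Nat.cast_nonneg m
  have hm1 : ((m : ℝ) + 1) * ε < 1 / 2 := by
    rw [lt_div_iff₀ (by linarith : (0:ℝ) < 2 * ε)] at hm
    nlinarith
  have hmε : (m : ℝ) * ε < 1 / 2 := by nlinarith
  have hmkey : 2 * ((m : ℝ) + 1) * ε < 1 := by nlinarith
  have hvv : v 2 ≤ v 1 := by rw [hv1, hv2]; linarith
  have hD := demand_two v d hvv
  have hd2pos : 0 < d 2 := by rw [hd2]; positivity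
  constructor
  · -- BR(m ε) = {1 - (m+1) ε}
    apply br_unique
    · linarith
    · intro p hp0 hne
      set q : ℝ := (m : ℝ) * ε with hq
      set t : ℝ := 1 - ((m : ℝ) + 1) * ε with ht
      have htq : t + q = 1 - ε := by rw [ht, hq]; ring
      have hDt : demand 2 v d (t + q) = d 2 := by
        rw [hD, if_pos]; rw [htq, hv2]
      rw [hDt]
      have htpos : 0 < t := by rw [ht]; linarith
      rw [hD (p + q)]
      by_cases hc2 : p + q ≤ v 2
      · rw [if_pos hc2]
        have hpt : p < t := by
          rw [hv2] at hc2
          have : p ≤ t := by rw [ht, hq] at *; linarith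
          exact lt_of_le_of_ne this hne
        exact mul_lt_mul_of_pos_right hpt hd2pos
      · rw [if_neg hc2]
        by_cases hc1 : p + q ≤ v 1
        · rw [if_pos hc1, hd1, hd2, mul_one, mul_one_div, lt_div_iff₀ h2ε]
          have hple : p ≤ 1 - q := by rw [hv1] at hc1; linarith
          rw [ht]
          rw [hq] at hple
          nlinarith
        · rw [if_neg hc1, mul_zero]
          positivity
  · -- BR(1 - (m+1) ε) = {(m+1) ε}
    apply br_unique
    · positivity
    · intro p hp0 hne
      set q : ℝ := 1 - ((m : ℝ) + 1) * ε with hq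
      set t : ℝ := ((m : ℝ) + 1) * ε with ht
      have htq : t + q = 1 := by rw [ht, hq]; ring
      have hDt : demand 2 v d (t + q) = d 1 := by
        rw [hD, if_neg, if_pos]
        · rw [htq, hv1]
        · rw [htq, hv2]; intro h; linarith
      rw [hDt, hd1, mul_one]
      have htpos : 0 < t := by rw [ht]; positivity
      rw [hD (p + q)]
      by_cases hc2 : p + q ≤ v 2
      · rw [if_pos hc2, hd2]
        rw [hv2] at hc2
        have hple : p ≤ (m : ℝ) * ε := by rw [hq] at hc2; linarith
        rw [mul_one_div, div_lt_iff₀ h2ε, ht]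
        nlinarith
      · rw [if_neg hc2]
        by_cases hc1 : p + q ≤ v 1
        · rw [if_pos hc1, hd1, mul_one]
          have : p ≤ t := by rw [hv1] at hc1; rw [ht, hq] at *; linarith
          exact lt_of_le_of_ne this hne
        · rw [if_neg hc1, mul_zero]; exact htpos
end

section
/- Fix reals ε and D with 0 < ε < 1/2 and ε·D > 2, and consider the instance with n = 2 demand levels given by v_1 = 1, v_2 = ε, d_1 = 1, d_2 = D. Then: (i) (ε/2, ε/2) is a pure Nash equilibrium with total revenue R(ε) = ε·D and welfare SW(ε) = 1 + ε·(D − 1) ≥ ε·D; (ii) (1/2, 1/2) is a pure Nash equilibrium with total revenue R(1) = 1 and welfare SW(1) = 1; (iii) for every q with ε < q < 1 − ε, the unique best response to q is 1 − q (BR(q) = {1 − q}) and (1 − q, q) is a pure Nash equilibrium of welfare and revenue 1. -/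
open scoped Classical

section aux
variable {ε D : ℝ} {v d : ℕ → ℝ}

lemma filter_hi (hε1 : ε < 1) (hv1 : v 1 = 1) (hv2 : v 2 = ε)
    {x : ℝ} (hx : x ≤ ε) : (Finset.Icc 1 2).filter (fun i => x ≤ v i) = {1, 2} := by
  ext i
  simp only [Finset.mem_filter, Finset.mem_Icc, Finset.mem_insert, Finset.mem_singleton]
  constructor
  · rintro ⟨⟨h1, h2⟩, _⟩; omega
  · rintro (rfl | rfl)
    · exact ⟨by omega, by rw [hv1]; linarith⟩
    · exact ⟨by omega, by rw [hv2]; linarith⟩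

lemma filter_mid (hv1 : v 1 = 1) (hv2 : v 2 = ε)
    {x : ℝ} (hx1 : ε < x) (hx2 : x ≤ 1) :
    (Finset.Icc 1 2).filter (fun i => x ≤ v i) = {1} := by
  ext i
  simp only [Finset.mem_filter, Finset.mem_Icc, Finset.mem_singleton]
  constructor
  · rintro ⟨⟨h1, h2⟩, hle⟩
    interval_cases i
    · rfl
    · rw [hv2] at hle; linarith
  · rintro rfl
    exact ⟨by omega, by rw [hv1]; exact hx2⟩

lemma demand_hi (hε1 : ε < 1) (hv1 : v 1 = 1) (hv2 : v 2 = ε) (hd2 : d 2 = D)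
    {x : ℝ} (hx : x ≤ ε) : demand 2 v d x = D := by
  rw [demand, filter_hi hε1 hv1 hv2 hx]
  rw [dif_pos (by decide : ({1,2} : Finset ℕ).Nonempty)]
  rw [show ∀ h, ({1,2} : Finset ℕ).max' h = 2 from fun h =>
    le_antisymm (Finset.max'_le _ _ _ (by decide)) (Finset.le_max' _ 2 (by decide))]
  exact hd2

lemma demand_mid (hv1 : v 1 = 1) (hv2 : v 2 = ε) (hd1 : d 1 = 1)
    {x : ℝ} (hx1 : ε < x) (hx2 : x ≤ 1) : demand 2 v d x = 1 := by
  rw [demand, filter_mid hv1 hv2 hx1 hx2]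
  rw [dif_pos (by decide : ({1} : Finset ℕ).Nonempty)]
  rw [show ∀ h, ({1} : Finset ℕ).max' h = 1 from fun h =>
    le_antisymm (Finset.max'_le _ _ _ (by decide)) (Finset.le_max' _ 1 (by decide))]
  exact hd1

lemma demand_lo (hv1 : v 1 = 1) (hv2 : v 2 = ε) (hε1 : ε < 1)
    {x : ℝ} (hx : 1 < x) : demand 2 v d x = 0 := by
  rw [demand, dif_neg]
  rintro ⟨i, hi⟩
  simp only [Finset.mem_filter, Finset.mem_Icc] at hi
  obtain ⟨⟨h1, h2⟩, hle⟩ := hi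
  interval_cases i
  · rw [hv1] at hle; linarith
  · rw [hv2] at hle; linarith

lemma welfare_hi (hε1 : ε < 1) (hv1 : v 1 = 1) (hv2 : v 2 = ε)
    (hd1 : d 1 = 1) (hd2 : d 2 = D) {x : ℝ} (hx : x ≤ ε) :
    welfare 2 v d x = 1 + ε * (D - 1) := by
  rw [welfare, filter_hi hε1 hv1 hv2 hx]
  rw [Finset.sum_insert (by decide), Finset.sum_singleton]
  norm_num [hv1, hv2, hd1, hd2]

lemma welfare_mid (hv1 : v 1 = 1) (hv2 : v 2 = ε) (hd1 : d 1 = 1)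
    {x : ℝ} (hx1 : ε < x) (hx2 : x ≤ 1) : welfare 2 v d x = 1 := by
  rw [welfare, filter_mid hv1 hv2 hx1 hx2, Finset.sum_singleton]
  norm_num [hv1, hd1]

variable (hε0 : 0 < ε) (hε : ε < 1 / 2) (hεD : 2 < ε * D)
  (hv1 : v 1 = 1) (hv2 : v 2 = ε) (hd1 : d 1 = 1) (hd2 : d 2 = D)

include hε0 hε hεD hv1 hv2 hd1 hd2

set_option linter.unusedSectionVars false

lemma br_mid {q : ℝ} (hq1 : ε < q) (hq2 : q ≤ 1) : InBR 2 v d q (1 - q) := by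
  have hε1 : ε < 1 := by linarith
  have hd : demand 2 v d (1 - q + q) = 1 := by
    rw [show 1 - q + q = 1 by ring]
    exact demand_mid hv1 hv2 hd1 hε1 le_rfl
  refine ⟨by linarith, fun p' hp' => ?_⟩
  rw [hd, mul_one]
  rcases le_or_gt (p' + q) 1 with h | h
  · rw [demand_mid hv1 hv2 hd1 (by linarith) h, mul_one]; linarith
  · rw [demand_lo hv1 hv2 hε1 h, mul_zero]; linarith

lemma br_lo : InBR 2 v d (ε / 2) (ε / 2) := by
  have hε1 : ε < 1 := by linarith
  have hD0 : 0 < D := by nlinarith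
  have hd : demand 2 v d (ε / 2 + ε / 2) = D :=
    demand_hi hε1 hv1 hv2 hd2 (by linarith)
  refine ⟨by linarith, fun p' hp' => ?_⟩
  rw [hd]
  rcases le_or_gt (p' + ε / 2) ε with h | h
  · rw [demand_hi hε1 hv1 hv2 hd2 h]
    have : p' ≤ ε / 2 := by linarith
    nlinarith
  · rcases le_or_gt (p' + ε / 2) 1 with h2 | h2
    · rw [demand_mid hv1 hv2 hd1 h h2, mul_one]; nlinarith
    · rw [demand_lo hv1 hv2 hε1 h2, mul_zero]; nlinarith

lemma br_unique_s10 {q p : ℝ} (hq1 : ε < q) (hq2 : q < 1 - ε) (h : InBR 2 v d q p) :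
    p = 1 - q := by
  have hε1 : ε < 1 := by linarith
  obtain ⟨hp0, hbr⟩ := h
  have h1 := hbr (1 - q) (by linarith)
  rw [show 1 - q + q = 1 by ring, demand_mid hv1 hv2 hd1 hε1 le_rfl, mul_one] at h1
  rcases le_or_gt (p + q) 1 with h2 | h2
  · rw [demand_mid hv1 hv2 hd1 (by linarith) h2, mul_one] at h1
    linarith
  · rw [demand_lo hv1 hv2 hε1 h2, mul_zero] at h1
    linarith

end aux

/-- In the instance `v₁ = 1`, `v₂ = ε`, `d₁ = 1`, `d₂ = D` with `εD > 2`: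
`(ε/2, ε/2)` is an equilibrium of revenue `εD` and welfare `1 + ε(D-1) ≥ εD`;
`(1/2, 1/2)` is an equilibrium of revenue and welfare `1`; and for every
`q ∈ (ε, 1-ε)` the unique best response to `q` is `1 - q`, and `(1-q, q)` is
an equilibrium of welfare and revenue `1`. -/
theorem stmt_10 (ε D : ℝ) (hε0 : 0 < ε) (hε : ε < 1 / 2) (hεD : 2 < ε * D)
    (v d : ℕ → ℝ) (hv1 : v 1 = 1) (hv2 : v 2 = ε)
    (hd1 : d 1 = 1) (hd2 : d 2 = D) :
    (IsNE 2 v d (ε / 2) (ε / 2) ∧ rev 2 v d ε = ε * D ∧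
      welfare 2 v d ε = 1 + ε * (D - 1) ∧ ε * D ≤ welfare 2 v d ε) ∧
    (IsNE 2 v d (1 / 2) (1 / 2) ∧ rev 2 v d 1 = 1 ∧ welfare 2 v d 1 = 1) ∧
    (∀ q : ℝ, ε < q → q < 1 - ε →
      (∀ p : ℝ, InBR 2 v d q p ↔ p = 1 - q) ∧
      IsNE 2 v d (1 - q) q ∧
      rev 2 v d ((1 - q) + q) = 1 ∧ welfare 2 v d ((1 - q) + q) = 1) := by
  have hε1 : ε < 1 := by linarith
  have brlo := br_lo hε0 hε hεD hv1 hv2 hd1 hd2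
  refine ⟨⟨⟨by linarith, by linarith, brlo, brlo⟩, ?_, ?_, ?_⟩, ⟨?_, ?_, ?_⟩, ?_⟩
  · rw [rev, demand_hi hε1 hv1 hv2 hd2 le_rfl]
  · exact welfare_hi hε1 hv1 hv2 hd1 hd2 le_rfl
  · rw [welfare_hi hε1 hv1 hv2 hd1 hd2 le_rfl]; nlinarith
  · have h12 : InBR 2 v d (1 / 2) (1 / 2) := by
      have := br_mid hε0 hε hεD hv1 hv2 hd1 hd2 (q := 1/2) hε (by norm_num)
      rwa [show (1 : ℝ) - 1/2 = 1/2 by norm_num] at this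
    exact ⟨by norm_num, by norm_num, h12, h12⟩
  · rw [rev, demand_mid hv1 hv2 hd1 hε1 le_rfl, mul_one]
  · exact welfare_mid hv1 hv2 hd1 hε1 le_rfl
  · intro q hq1 hq2
    have hbm : InBR 2 v d q (1 - q) :=
      br_mid hε0 hε hεD hv1 hv2 hd1 hd2 hq1 (by linarith)
    have hbm' : InBR 2 v d (1 - q) q := by
      have := br_mid hε0 hε hεD hv1 hv2 hd1 hd2 (q := 1 - q) (by linarith) (by linarith)
      rwa [show 1 - (1 - q) = q by ring] at this
    refine ⟨fun p => ⟨fun h => br_unique_s10 hε0 hε hεD hv1 hv2 hd1 hd2 hq1 hq2 h,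
      fun h => h ▸ hbm⟩, ⟨by linarith, by linarith, hbm, hbm'⟩, ?_, ?_⟩
    · rw [show 1 - q + q = 1 by ring, rev, demand_mid hv1 hv2 hd1 hε1 le_rfl, mul_one]
    · rw [show 1 - q + q = 1 by ring]
      exact welfare_mid hv1 hv2 hd1 hε1 le_rfl
end

section
/- Fix an integer n ≥ 2. There exists ε_0 > 0 such that for every ε ∈ (0, ε_0) the instance with n demand levels given by v_i = ε^{i−1} and d_i = ((2−ε)/ε)^{i−1} (for i = 1, …, n) satisfies: for every i ∈ {1, …, n} the pair (v_i/2, v_i/2) is a pure Nash equilibrium with total revenue R(v_i) = (2−ε)^{i−1}; moreover SW(v_n) = 2·(2−ε)^{n−1} − 1 and SW(v_1) = R(v_1) = 1. In particular the instance has an equilibrium of welfare 2·(2−ε)^{n−1} − 1 and revenue (2−ε)^{n−1}, as well as an equilibrium of welfare and revenue 1. -/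
open scoped Classical

lemma key_ineq (ε : ℝ) (hε0 : 0 ≤ ε) (hε1 : ε ≤ 1) (m : ℕ) :
    2 - ε ^ m ≤ (2 - ε) ^ m := by
  induction m with
  | zero => norm_num
  | succ m ih =>
    have h1 : ε ^ m ≤ 1 := pow_le_one₀ hε0 hε1
    have h2 : (0:ℝ) ≤ 2 - ε := by linarith
    have h3 : (0:ℝ) ≤ (1 - ε) * (1 - ε ^ m) := mul_nonneg (by linarith) (by linarith)
    calc 2 - ε ^ (m+1) ≤ (2 - ε) * (2 - ε ^ m) := by rw [pow_succ]; nlinarith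
      _ ≤ (2 - ε) * (2 - ε) ^ m := by nlinarith
      _ = (2 - ε) ^ (m+1) := by ring

lemma dev_ineq (ε : ℝ) (hε0 : 0 < ε) (hε1 : ε < 1) (a b : ℕ) (hab : a ≤ b) :
    (ε ^ a - ε ^ b / 2) * ((2 - ε) / ε) ^ a ≤ (ε ^ b / 2) * ((2 - ε) / ε) ^ b := by
  obtain ⟨m, rfl⟩ := Nat.exists_eq_add_of_le hab
  have hεne : ε ≠ 0 := ne_of_gt hε0
  have hpos : (0:ℝ) < 2 - ε := by linarith
  have key := key_ineq ε hε0.le hε1.le m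
  have hεa : (0:ℝ) < ε ^ a := pow_pos hε0 a
  have h1 : (ε ^ a - ε ^ (a+m) / 2) * ((2 - ε) / ε) ^ a
      = (1 - ε ^ m / 2) * (2 - ε) ^ a := by
    rw [div_pow, pow_add]; field_simp
  have h2 : (ε ^ (a+m) / 2) * ((2 - ε) / ε) ^ (a+m) = (2 - ε) ^ (a+m) / 2 := by
    rw [div_pow]; field_simp
  rw [h1, h2, pow_add]
  have hpa : (0:ℝ) < (2 - ε) ^ a := pow_pos hpos a
  nlinarith [mul_le_mul_of_nonneg_left key hpa.le]

lemma demand_eq' (n : ℕ) (v d : ℕ → ℝ) (x : ℝ) (k : ℕ) (hk1 : 1 ≤ k) (hkn : k ≤ n)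
    (hle : x ≤ v k) (hgt : ∀ i, k < i → i ≤ n → v i < x) :
    demand n v d x = d k := by
  have hkmem : k ∈ (Finset.Icc 1 n).filter (fun i => x ≤ v i) := by
    simp only [Finset.mem_filter, Finset.mem_Icc]
    exact ⟨⟨hk1, hkn⟩, hle⟩
  have hne : ((Finset.Icc 1 n).filter (fun i => x ≤ v i)).Nonempty := ⟨k, hkmem⟩
  rw [demand, dif_pos hne]
  congr 1
  refine le_antisymm ?_ (Finset.le_max' _ k hkmem)
  have hm := Finset.max'_mem _ hne
  simp only [Finset.mem_filter, Finset.mem_Icc] at hm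
  by_contra h
  push_neg at h
  exact absurd hm.2 (not_le.mpr (hgt _ h hm.1.2))

lemma sum_lemma (ε : ℝ) (hε0 : 0 < ε) (n : ℕ) (hn : 1 ≤ n) :
    ∑ i ∈ Finset.Icc 1 n,
      (ε ^ (i-1) * (((2-ε)/ε) ^ (i-1) - if 1 < i then ((2-ε)/ε) ^ (i-1-1) else 0))
      = 2 * (2-ε) ^ (n-1) - 1 := by
  have hεne : ε ≠ 0 := ne_of_gt hε0
  induction n, hn using Nat.le_induction with
  | base => norm_num
  | succ n hn ih =>
    rw [Finset.sum_Icc_succ_top (by omega : 1 ≤ n + 1), ih]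
    obtain ⟨m, rfl⟩ := Nat.exists_eq_add_of_le hn
    simp only [show (1+m) + 1 - 1 = m + 1 from by omega, show (1:ℕ)+m-1 = m from by omega,
      show m + 1 - 1 = m from by omega, if_pos (show (1:ℕ) < 1 + m + 1 from by omega)]
    rw [div_pow, div_pow]
    field_simp
    ring

/-- For the instance `vᵢ = ε^(i-1)`, `dᵢ = ((2-ε)/ε)^(i-1)` with `ε` small
enough: `(vᵢ/2, vᵢ/2)` is a pure Nash equilibrium of revenue `(2-ε)^(i-1)`
for every `i`, the welfare at `v n` is `2(2-ε)^(n-1) - 1`, and the welfare and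
revenue at `v 1` are `1`. -/
theorem stmt_11 (n : ℕ) (hn : 2 ≤ n) :
    ∃ ε₀ : ℝ, 0 < ε₀ ∧ ∀ ε : ℝ, 0 < ε → ε < ε₀ →
      ∀ v d : ℕ → ℝ,
        (∀ i ∈ Finset.Icc 1 n, v i = ε ^ (i - 1)) →
        (∀ i ∈ Finset.Icc 1 n, d i = ((2 - ε) / ε) ^ (i - 1)) →
        (∀ i ∈ Finset.Icc 1 n,
          IsNE n v d (v i / 2) (v i / 2) ∧ rev n v d (v i) = (2 - ε) ^ (i - 1)) ∧
        welfare n v d (v n) = 2 * (2 - ε) ^ (n - 1) - 1 ∧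
        welfare n v d (v 1) = 1 ∧ rev n v d (v 1) = 1 := by
  refine ⟨1/2, by norm_num, ?_⟩
  intro ε hε0 hε2 v d hv hd
  have hε1 : ε < 1 := by linarith
  have hεne : ε ≠ 0 := ne_of_gt hε0
  have h2ε : (0:ℝ) < 2 - ε := by linarith
  have hdpos : ∀ i ∈ Finset.Icc 1 n, 0 < d i := by
    intro i hi; rw [hd i hi]; positivity
  have hvpos : ∀ i ∈ Finset.Icc 1 n, 0 < v i := by
    intro i hi; rw [hv i hi]; positivity
  have hdemv : ∀ i ∈ Finset.Icc 1 n, demand n v d (v i) = d i := by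
    intro i hi
    obtain ⟨hi1, hin⟩ := Finset.mem_Icc.mp hi
    refine demand_eq' n v d (v i) i hi1 hin le_rfl ?_
    intro j hij hjn
    rw [hv i hi, hv j (Finset.mem_Icc.mpr ⟨by omega, hjn⟩)]
    exact pow_lt_pow_right_of_lt_one₀ hε0 hε1 (by omega)
  have hrev : ∀ i ∈ Finset.Icc 1 n, rev n v d (v i) = (2-ε) ^ (i-1) := by
    intro i hi
    rw [rev, hdemv i hi, hv i hi, hd i hi, ← mul_pow]
    congr 1
    field_simp
  have hBR : ∀ i ∈ Finset.Icc 1 n, InBR n v d (v i / 2) (v i / 2) := by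
    intro i hi
    obtain ⟨hi1, hin⟩ := Finset.mem_Icc.mp hi
    have hvi := hv i hi
    have hvipos : 0 < v i := hvpos i hi
    have hdipos : 0 < d i := hdpos i hi
    refine ⟨by linarith, ?_⟩
    intro p' hp'
    have hsum : v i / 2 + v i / 2 = v i := by ring
    rw [hsum, hdemv i hi]
    by_cases hne : ((Finset.Icc 1 n).filter (fun j => p' + v i / 2 ≤ v j)).Nonempty
    · set k := ((Finset.Icc 1 n).filter (fun j => p' + v i / 2 ≤ v j)).max' hne with hk
      have hkmem := Finset.max'_mem _ hne
      rw [← hk] at hkmem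
      simp only [Finset.mem_filter, Finset.mem_Icc] at hkmem
      obtain ⟨⟨hk1, hkn⟩, hxk⟩ := hkmem
      have hdx : demand n v d (p' + v i / 2) = d k := by rw [demand, dif_pos hne]
      have hvk := hv k (Finset.mem_Icc.mpr ⟨hk1, hkn⟩)
      have hdk := hd k (Finset.mem_Icc.mpr ⟨hk1, hkn⟩)
      have hki : k ≤ i := by
        by_contra hcon
        push_neg at hcon
        have e1 : ε ^ (k-1) ≤ ε ^ i := pow_le_pow_of_le_one hε0.le hε1.le (by omega)
        have e2 : ε ^ i = ε ^ (i-1) * ε := by rw [← pow_succ]; congr 1; omega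
        have e3 : (0:ℝ) < ε ^ (i-1) := pow_pos hε0 _
        have e4 : ε ^ (i-1) * ε < ε ^ (i-1) * (1/2) := by nlinarith
        rw [e2] at e1
        rw [hvk, hvi] at hxk
        linarith
      have hp'le : p' ≤ v k - v i / 2 := by linarith
      calc p' * demand n v d (p' + v i / 2) = p' * d k := by rw [hdx]
        _ ≤ (v k - v i / 2) * d k :=
            mul_le_mul_of_nonneg_right hp'le
              (hdpos k (Finset.mem_Icc.mpr ⟨hk1, hkn⟩)).le
        _ ≤ v i / 2 * d i := by
            rw [hvk, hdk, hvi, hd i hi]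
            have := dev_ineq ε hε0 hε1 (k-1) (i-1) (by omega)
            linarith
    · rw [demand, dif_neg hne, mul_zero]
      positivity
  have h1mem : (1:ℕ) ∈ Finset.Icc 1 n := Finset.mem_Icc.mpr ⟨le_rfl, by omega⟩
  have hmemn : n ∈ Finset.Icc 1 n := Finset.mem_Icc.mpr ⟨by omega, le_rfl⟩
  have hwn : welfare n v d (v n) = 2 * (2-ε) ^ (n-1) - 1 := by
    have hfilt : (Finset.Icc 1 n).filter (fun i => v n ≤ v i) = Finset.Icc 1 n := by
      apply Finset.filter_true_of_mem
      intro i hi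
      obtain ⟨hi1, hin⟩ := Finset.mem_Icc.mp hi
      rw [hv i hi, hv n hmemn]
      exact pow_le_pow_of_le_one hε0.le hε1.le (by omega)
    have hterm : ∀ i ∈ Finset.Icc 1 n, v i * (d i - if 1 < i then d (i-1) else 0)
        = ε^(i-1) * (((2-ε)/ε)^(i-1) - if 1 < i then ((2-ε)/ε)^(i-1-1) else 0) := by
      intro i hi
      obtain ⟨hi1, hin⟩ := Finset.mem_Icc.mp hi
      split_ifs with h
      · rw [hv i hi, hd i hi, hd (i-1) (Finset.mem_Icc.mpr ⟨by omega, by omega⟩)]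
      · rw [hv i hi, hd i hi]
    rw [welfare, hfilt, Finset.sum_congr rfl hterm]
    exact sum_lemma ε hε0 n (by omega)
  have hw1 : welfare n v d (v 1) = 1 := by
    have hfilt : (Finset.Icc 1 n).filter (fun i => v 1 ≤ v i) = {1} := by
      ext j
      simp only [Finset.mem_filter, Finset.mem_Icc, Finset.mem_singleton]
      constructor
      · rintro ⟨⟨hj1, hjn⟩, hle⟩
        by_contra hne'
        have hlt : v j < v 1 := by
          rw [hv 1 h1mem, hv j (Finset.mem_Icc.mpr ⟨hj1, hjn⟩)]
          exact pow_lt_pow_right_of_lt_one₀ hε0 hε1 (by omega)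
        linarith
      · rintro rfl
        exact ⟨⟨le_rfl, by omega⟩, le_rfl⟩
    rw [welfare, hfilt, Finset.sum_singleton]
    simp [hv 1 h1mem, hd 1 h1mem]
  have hr1 : rev n v d (v 1) = 1 := by simpa using hrev 1 h1mem
  exact ⟨fun i hi => ⟨⟨by linarith [hvpos i hi], by linarith [hvpos i hi],
    hBR i hi, hBR i hi⟩, hrev i hi⟩, hwn, hw1, hr1⟩
end

section
/- Fix an integer n ≥ 2. There exists ε_0 > 0 such that for every ε ∈ (0, ε_0), in the instance with n demand levels given by v_i = ε^{i−1} and d_i = ((2−ε)/ε)^{i−1} (for i = 1, …, n), the following holds for every j ∈ {1, …, n−1}: if x is a price with v_{j+1} < x < v_j/2, then the unique best response to x is v_j − x, i.e. BR(x) = {v_j − x}. -/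
open scoped Classical

/-- Convexity-type fact: `(2-ε)^m + ε^m ≥ 2` for `0 ≤ ε ≤ 1`, `m ≥ 1`. -/
lemma aux_pow_add_pow {ε : ℝ} (h0 : 0 ≤ ε) (h1 : ε ≤ 1) :
    ∀ m : ℕ, 1 ≤ m → 2 ≤ (2 - ε) ^ m + ε ^ m := by
  intro m hm
  induction m with
  | zero => omega
  | succ k ih =>
    rcases Nat.lt_or_ge k 1 with h | h
    · interval_cases k
      simp
    · have hik := ih h
      have hA : (1:ℝ) ≤ (2 - ε) ^ k := one_le_pow₀ (by linarith)
      have hB : ε ^ k ≤ 1 := pow_le_one₀ h0 h1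
      have hB0 : (0:ℝ) ≤ ε ^ k := pow_nonneg h0 k
      rw [pow_succ, pow_succ]
      nlinarith [mul_nonneg (by linarith : (0:ℝ) ≤ (2-ε)^k - ε^k)
        (by linarith : (0:ℝ) ≤ 1 - ε)]

/-- Evaluate `demand` when a maximizing index is known. -/
lemma aux_demand_eq {n : ℕ} (v d : ℕ → ℝ) {i : ℕ} {t : ℝ}
    (hi : i ∈ Finset.Icc 1 n) (ht : t ≤ v i)
    (hmax : ∀ k ∈ Finset.Icc 1 n, t ≤ v k → k ≤ i) :
    demand n v d t = d i := by
  classical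
  have hmem : i ∈ (Finset.Icc 1 n).filter (fun k => t ≤ v k) :=
    Finset.mem_filter.2 ⟨hi, ht⟩
  have hne : ((Finset.Icc 1 n).filter (fun k => t ≤ v k)).Nonempty := ⟨i, hmem⟩
  rw [demand, dif_pos hne]
  congr 1
  refine le_antisymm (Finset.max'_le _ hne _ fun k hk => ?_) (Finset.le_max' _ _ hmem)
  obtain ⟨hk1, hk2⟩ := Finset.mem_filter.1 hk
  exact hmax k hk1 hk2

/-- In the instance `vᵢ = ε^(i-1)`, `dᵢ = ((2-ε)/ε)^(i-1)` with `ε` small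
enough: for every `j ∈ {1,…,n-1}` and every price `x` with
`v (j+1) < x < v j / 2`, the unique best response to `x` is `v j - x`. -/
theorem stmt_12 (n : ℕ) (hn : 2 ≤ n) :
    ∃ ε₀ : ℝ, 0 < ε₀ ∧ ∀ ε : ℝ, 0 < ε → ε < ε₀ →
      ∀ v d : ℕ → ℝ,
        (∀ i ∈ Finset.Icc 1 n, v i = ε ^ (i - 1)) →
        (∀ i ∈ Finset.Icc 1 n, d i = ((2 - ε) / ε) ^ (i - 1)) →
        ∀ j : ℕ, 1 ≤ j → j < n →
          ∀ x : ℝ, v (j + 1) < x → x < v j / 2 →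
            ∀ p : ℝ, InBR n v d x p ↔ p = v j - x := by
  classical
  refine ⟨1/2, by norm_num, ?_⟩
  intro ε hε hε2 v d hv hd j hj1 hjn x hx1 hx2 p
  have hε1 : ε < 1 := by linarith
  set r : ℝ := (2 - ε) / ε with hrdef
  have hεr : ε * r = 2 - ε := by
    rw [hrdef]; field_simp
  have hr1 : 1 < r := by
    rw [hrdef, lt_div_iff₀ hε]; linarith
  have hr0 : 0 < r := by linarith
  have hjmem : j ∈ Finset.Icc 1 n := Finset.mem_Icc.2 ⟨hj1, by omega⟩
  have hjmem1 : j + 1 ∈ Finset.Icc 1 n := Finset.mem_Icc.2 ⟨by omega, by omega⟩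
  have hvj : v j = ε ^ (j - 1) := hv j hjmem
  have hvj1 : v (j + 1) = ε ^ j := by
    have := hv (j + 1) hjmem1
    simpa using this
  have hvjpos : 0 < v j := by rw [hvj]; positivity
  have hxpos : 0 < x := lt_trans (by rw [hvj1]; positivity) hx1
  have hpj : 0 < v j - x := by linarith
  have hdj : d j = r ^ (j - 1) := hd j hjmem
  have hdjpos : 0 < d j := by rw [hdj]; positivity
  -- v is antitone on [1, n]
  have hvle : ∀ i k : ℕ, 1 ≤ i → i ≤ k → k ≤ n → v k ≤ v i := by
    intro i k hi hik hk
    rw [hv i (Finset.mem_Icc.2 ⟨hi, by omega⟩), hv k (Finset.mem_Icc.2 ⟨by omega, hk⟩)]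
    exact pow_le_pow_of_le_one hε.le hε1.le (by omega)
  -- key revenue comparison between levels i < j
  have hkey : ∀ i : ℕ, 1 ≤ i → i < j → (v i - x) * d i < (v j - x) * d j := by
    intro i hi hij
    have himem : i ∈ Finset.Icc 1 n := Finset.mem_Icc.2 ⟨hi, by omega⟩
    have hvi : v i = ε ^ (i - 1) := hv i himem
    have hdi : d i = r ^ (i - 1) := hd i himem
    have hεrpow : ∀ m : ℕ, ε ^ m * r ^ m = (2 - ε) ^ m := by
      intro m; rw [← mul_pow, hεr]
    have hrpow : r ^ (i - 1) < r ^ (j - 1) :=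
      pow_lt_pow_right₀ hr1 (by omega)
    have hx2' : x < ε ^ (j - 1) / 2 := by rw [← hvj]; linarith
    -- step 1
    have hstep1 : x * (r ^ (j - 1) - r ^ (i - 1)) <
        (ε ^ (j - 1) / 2) * (r ^ (j - 1) - r ^ (i - 1)) :=
      mul_lt_mul_of_pos_right hx2' (by linarith)
    -- step 2
    have hsplit : ε ^ (j - 1) = ε ^ (j - i) * ε ^ (i - 1) := by
      rw [← pow_add]; congr 1; omega
    have hsplit2 : (2 - ε) ^ (j - 1) = (2 - ε) ^ (j - i) * (2 - ε) ^ (i - 1) := by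
      rw [← pow_add]; congr 1; omega
    have hconv : 2 ≤ (2 - ε) ^ (j - i) + ε ^ (j - i) :=
      aux_pow_add_pow hε.le hε1.le (j - i) (by omega)
    have hApos : (0:ℝ) < (2 - ε) ^ (i - 1) := pow_pos (by linarith) _
    have hstep2 : (ε ^ (j - 1) / 2) * (r ^ (j - 1) - r ^ (i - 1)) ≤
        (2 - ε) ^ (j - 1) - (2 - ε) ^ (i - 1) := by
      have e1 : ε ^ (j - 1) * r ^ (j - 1) = (2 - ε) ^ (j - 1) := hεrpow _
      have e2 : ε ^ (j - 1) * r ^ (i - 1) = ε ^ (j - i) * (2 - ε) ^ (i - 1) := by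
        rw [hsplit, mul_assoc, hεrpow]
      nlinarith [mul_le_mul_of_nonneg_right hconv hApos.le]
    have e3 : (v i - x) * d i = (2 - ε) ^ (i - 1) - x * r ^ (i - 1) := by
      rw [hvi, hdi, sub_mul, hεrpow]
    have e4 : (v j - x) * d j = (2 - ε) ^ (j - 1) - x * r ^ (j - 1) := by
      rw [hvj, hdj, sub_mul, hεrpow]
    rw [e3, e4]
    nlinarith [hstep1, hstep2]
  -- demand at total price v j is d j
  have hdemvj : demand n v d (v j) = d j := by
    refine aux_demand_eq v d hjmem le_rfl ?_
    intro k hk hvk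
    by_contra hkj
    push_neg at hkj
    have : v k ≤ v (j + 1) := hvle (j + 1) k (by omega) (by omega) (Finset.mem_Icc.1 hk).2
    linarith
  -- the strict upper bound for any deviation p' ≠ v j - x
  have hmain : ∀ p' : ℝ, 0 ≤ p' → p' ≠ v j - x →
      p' * demand n v d (p' + x) < (v j - x) * d j := by
    intro p' hp' hne
    by_cases hfe : ((Finset.Icc 1 n).filter (fun k => p' + x ≤ v k)).Nonempty
    · set i := ((Finset.Icc 1 n).filter (fun k => p' + x ≤ v k)).max' hfe with hidef
      have himem := Finset.max'_mem _ hfe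
      rw [← hidef] at himem
      obtain ⟨hi1, hi2⟩ := Finset.mem_filter.1 himem
      obtain ⟨hi1a, hi1b⟩ := Finset.mem_Icc.1 hi1
      have hdemand : demand n v d (p' + x) = d i := by
        rw [demand, dif_pos hfe]
      have hij : i ≤ j := by
        by_contra h
        push_neg at h
        have : v i ≤ v (j + 1) := hvle (j + 1) i (by omega) (by omega) hi1b
        linarith
      have hdipos : 0 < d i := by
        rw [hd i hi1]; positivity
      rw [hdemand]
      rcases Nat.lt_or_ge i j with hlt | hge
      · calc p' * d i ≤ (v i - x) * d i :=
              mul_le_mul_of_nonneg_right (by linarith) hdipos.le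
          _ < (v j - x) * d j := hkey i hi1a hlt
      · have : i = j := by omega
        subst this
        have hlt : p' < v i - x := lt_of_le_of_ne (by linarith) hne
        exact mul_lt_mul_of_pos_right hlt hdipos
    · rw [demand, dif_neg hfe, mul_zero]
      positivity
  -- equality at the claimed best response
  have heq : (v j - x) * demand n v d ((v j - x) + x) = (v j - x) * d j := by
    rw [show (v j - x) + x = v j by ring, hdemvj]
  constructor
  · rintro ⟨hp0, hbr⟩
    by_contra hne
    have h1 := hbr (v j - x) hpj.le
    rw [show (v j - x) + x = v j by ring, hdemvj] at h1
    have h2 := hmain p hp0 hne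
    linarith
  · rintro rfl
    refine ⟨hpj.le, ?_⟩
    intro p' hp'
    rw [heq]
    by_cases hne : p' = v j - x
    · subst hne
      rw [show (v j - x) + x = v j by ring, hdemvj]
    · exact (hmain p' hp' hne).le
end

section
/- Let v and v' be reals with 0 < v < v' ≤ v_1. If v' − v/2 ∈ BR(v/2) (the best reply to the price v/2 has total price v' > v), then v·√(𝒟(v)) ≤ v'·√(𝒟(v')); equivalently, (R(v'))²·𝒟(v) ≥ (R(v))²·𝒟(v'), i.e. v ≤ v'·√(𝒟(v')/𝒟(v)). -/
open scoped Classical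

lemma demand_pos' (n : ℕ) (v d : ℕ → ℝ) (h : ValidInstance n v d) (x : ℝ)
    (hx : x ≤ v 1) : 0 < demand n v d x := by
  obtain ⟨hn, _, _, hd1, hd⟩ := h
  have h1 : (1:ℕ) ∈ (Finset.Icc 1 n).filter (fun i => x ≤ v i) := by
    simp only [Finset.mem_filter, Finset.mem_Icc]
    exact ⟨⟨le_refl 1, by omega⟩, hx⟩
  have hne : ((Finset.Icc 1 n).filter (fun i => x ≤ v i)).Nonempty := ⟨1, h1⟩
  rw [demand, dif_pos hne]
  set m := ((Finset.Icc 1 n).filter (fun i => x ≤ v i)).max' hne with hm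
  have hmem := Finset.max'_mem _ hne
  have hm1 : 1 ≤ m := Finset.le_max' _ 1 h1
  have hmn : m ≤ n := (Finset.mem_Icc.mp (Finset.mem_filter.mp hmem).1).2
  rcases eq_or_lt_of_le hm1 with h' | h'
  · rw [← h']; exact hd1
  · exact hd1.trans (hd 1 m le_rfl h' hmn)

/-- If the best reply to `a/2` has total price `a' > a`, then
`a·√(𝒟(a)) ≤ a'·√(𝒟(a'))`; equivalently `(R a')²·𝒟(a) ≥ (R a)²·𝒟(a')`,
i.e. `a ≤ a'·√(𝒟(a')/𝒟(a))`. -/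
theorem stmt_13 (n : ℕ) (v d : ℕ → ℝ) (h : ValidInstance n v d)
    (a a' : ℝ) (ha : 0 < a) (haa' : a < a') (ha' : a' ≤ v 1)
    (hbr : InBR n v d (a / 2) (a' - a / 2)) :
    a * Real.sqrt (demand n v d a) ≤ a' * Real.sqrt (demand n v d a') ∧
    (rev n v d a) ^ 2 * demand n v d a' ≤ (rev n v d a') ^ 2 * demand n v d a ∧
    a ≤ a' * Real.sqrt (demand n v d a' / demand n v d a) := by
  have hA : 0 < demand n v d a := demand_pos' n v d h a (le_trans haa'.le ha')
  have hA' : 0 < demand n v d a' := demand_pos' n v d h a' ha'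
  have hbr2 := hbr.2 (a/2) (by positivity)
  have e1 : a/2 + a/2 = a := by ring
  have e2 : a' - a/2 + a/2 = a' := by ring
  rw [e1, e2] at hbr2
  have key : a^2 * demand n v d a ≤ a'^2 * demand n v d a' := by
    nlinarith [mul_le_mul_of_nonneg_left hbr2 (by linarith : (0:ℝ) ≤ 2*a),
      sq_nonneg (a' - a), hA'.le]
  have h1 : a * Real.sqrt (demand n v d a) ≤ a' * Real.sqrt (demand n v d a') := by
    have := Real.sqrt_le_sqrt key
    rwa [Real.sqrt_mul (sq_nonneg a), Real.sqrt_mul (sq_nonneg a'),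
      Real.sqrt_sq ha.le, Real.sqrt_sq (by linarith)] at this
  refine ⟨h1, ?_, ?_⟩
  · simp only [rev]
    nlinarith [mul_le_mul_of_nonneg_right key (mul_nonneg hA.le hA'.le), hA.le, hA'.le]
  · rw [Real.sqrt_div hA'.le, ← mul_div_assoc, le_div_iff₀ (Real.sqrt_pos.mpr hA)]
    exact h1
end

section
/- Let v* be a total price with 0 < v* ≤ v_1 such that (v*/2, v*/2) is a pure Nash equilibrium. Then the welfare at this equilibrium is at most a logarithmic-in-D multiple of its revenue: SW(v*) ≤ 2·(log₂ D + 1)·R(v*), where D = d_n/d_1. -/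
open scoped Classical

lemma my_dpos (n : ℕ) (d : ℕ → ℝ) (hd1 : 0 < d 1)
    (hmono : ∀ i j, 1 ≤ i → i < j → j ≤ n → d i < d j) :
    ∀ i, 1 ≤ i → i ≤ n → 0 < d i := by
  intro i h1 h2
  rcases eq_or_lt_of_le h1 with h | h
  · rwa [← h]
  · exact hd1.trans (hmono 1 i le_rfl h h2)

lemma my_sum_f_le (n : ℕ) (d : ℕ → ℝ) (hd1 : 0 < d 1)
    (hmono : ∀ i j, 1 ≤ i → i < j → j ≤ n → d i < d j) :
    ∀ k, 1 ≤ k → k ≤ n →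
      ∑ i ∈ Finset.Icc 1 k, (d i - if 1 < i then d (i - 1) else 0) / d i
        ≤ 1 + Real.log (d k) - Real.log (d 1) := by
  intro k hk
  induction k, hk using Nat.le_induction with
  | base =>
    intro _
    simp [div_self (ne_of_gt hd1)]
  | succ k hk ih =>
    intro hkn
    have hkn' : k ≤ n := le_trans (Nat.le_succ k) hkn
    have hdk : 0 < d k := my_dpos n d hd1 hmono k hk hkn'
    have hdk1 : 0 < d (k + 1) := my_dpos n d hd1 hmono (k + 1) (by omega) hkn
    have hlt : d k < d (k + 1) := hmono k (k + 1) hk (Nat.lt_succ_self k) hkn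
    rw [Finset.sum_Icc_succ_top (by omega)]
    have hterm : (d (k + 1) - if 1 < k + 1 then d (k + 1 - 1) else 0) / d (k + 1)
        ≤ Real.log (d (k + 1)) - Real.log (d k) := by
      rw [if_pos (by omega)]
      simp only [Nat.add_sub_cancel]
      have hq : 0 < d k / d (k + 1) := div_pos hdk hdk1
      have := Real.log_le_sub_one_of_pos hq
      rw [Real.log_div (ne_of_gt hdk) (ne_of_gt hdk1)] at this
      have h2 : (d (k + 1) - d k) / d (k + 1) = 1 - d k / d (k + 1) := by
        field_simp
      rw [h2]
      linarith
    have := ih hkn'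
    linarith

lemma my_demand_at (n : ℕ) (v d : ℕ → ℝ) (h : ValidInstance n v d)
    (i : ℕ) (h1 : 1 ≤ i) (h2 : i ≤ n) : demand n v d (v i) = d i := by
  classical
  have hi : i ∈ (Finset.Icc 1 n).filter (fun j => v i ≤ v j) := by
    simp [Finset.mem_Icc, h1, h2]
  have hne : ((Finset.Icc 1 n).filter (fun j => v i ≤ v j)).Nonempty := ⟨i, hi⟩
  rw [demand, dif_pos hne]
  congr 1
  apply le_antisymm
  · by_contra hlt
    push_neg at hlt
    have hm := Finset.max'_mem _ hne
    simp only [Finset.mem_filter, Finset.mem_Icc] at hm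
    have := h.2.2.1 i _ h1 hlt hm.1.2
    linarith [hm.2]
  · exact Finset.le_max' _ i hi

/-- The welfare of a symmetric equilibrium is at most `O(log D)` times its
revenue: `SW(v*) ≤ 2(log₂ D + 1)·R(v*)`. -/
theorem stmt_14 (n : ℕ) (v d : ℕ → ℝ) (h : ValidInstance n v d)
    (vstar : ℝ) (hv0 : 0 < vstar) (hv1 : vstar ≤ v 1)
    (hNE : IsNE n v d (vstar / 2) (vstar / 2)) :
    welfare n v d vstar ≤ 2 * (Real.logb 2 (d n / d 1) + 1) * rev n v d vstar := by
  classical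
  obtain ⟨hn2, hvn, hvdec, hd1, hdinc⟩ := h
  set S := (Finset.Icc 1 n).filter (fun i => vstar ≤ v i) with hSdef
  have h1n : 1 ≤ n := by omega
  have h1S : 1 ∈ S := by simp [hSdef, Finset.mem_Icc, h1n, hv1]
  have hS : S.Nonempty := ⟨1, h1S⟩
  set k := S.max' hS with hkdef
  have hkS : k ∈ S := Finset.max'_mem _ hS
  have hk1 : 1 ≤ k := by
    simp only [hSdef, Finset.mem_filter, Finset.mem_Icc] at hkS; exact hkS.1.1
  have hkn : k ≤ n := by
    simp only [hSdef, Finset.mem_filter, Finset.mem_Icc] at hkS; exact hkS.1.2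
  have hvk : vstar ≤ v k := by
    simp only [hSdef, Finset.mem_filter, Finset.mem_Icc] at hkS; exact hkS.2
  have hdpos : ∀ i, 1 ≤ i → i ≤ n → 0 < d i := my_dpos n d hd1 hdinc
  have hdk : 0 < d k := hdpos k hk1 hkn
  -- demand at vstar
  have hdemv : demand n v d vstar = d k := by
    rw [demand, dif_pos hS]
  -- S = Icc 1 k
  have hSeq : S = Finset.Icc 1 k := by
    ext i
    simp only [hSdef, Finset.mem_filter, Finset.mem_Icc]
    constructor
    · rintro ⟨⟨hi1, hin⟩, hvi⟩
      exact ⟨hi1, Finset.le_max' _ i (by simp [hSdef, Finset.mem_Icc, hi1, hin, hvi])⟩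
    · rintro ⟨hi1, hik⟩
      have hin : i ≤ n := le_trans hik hkn
      refine ⟨⟨hi1, hin⟩, ?_⟩
      rcases eq_or_lt_of_le hik with rfl | hik'
      · exact hvk
      · exact le_of_lt (lt_of_le_of_lt hvk (hvdec i k hi1 hik' hkn))
  -- key inequality from NE
  have hkey : ∀ i, 1 ≤ i → i ≤ k → v i * d i ≤ vstar * d k := by
    intro i hi1 hik
    have hiS : i ∈ S := by rw [hSeq]; simp [Finset.mem_Icc, hi1, hik]
    have hvi : vstar ≤ v i := by
      simp only [hSdef, Finset.mem_filter, Finset.mem_Icc] at hiS; exact hiS.2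
    have hin : i ≤ n := le_trans hik hkn
    have hBR := hNE.2.2.1.2 (v i - vstar / 2) (by linarith)
    rw [sub_add_cancel, add_halves, hdemv, my_demand_at n v d
      ⟨hn2, hvn, hvdec, hd1, hdinc⟩ i hi1 hin] at hBR
    have hdi : 0 < d i := hdpos i hi1 hin
    nlinarith [mul_nonneg (sub_nonneg.2 hvi) (le_of_lt hdi)]
  -- bound welfare
  have hwel : welfare n v d vstar
      ≤ vstar * d k * ∑ i ∈ Finset.Icc 1 k,
          (d i - if 1 < i then d (i - 1) else 0) / d i := by
    rw [welfare, ← hSdef, hSeq, Finset.mul_sum]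
    apply Finset.sum_le_sum
    intro i hi
    simp only [Finset.mem_Icc] at hi
    obtain ⟨hi1, hik⟩ := hi
    have hin : i ≤ n := le_trans hik hkn
    have hdi : 0 < d i := hdpos i hi1 hin
    have he : (0:ℝ) ≤ d i - if 1 < i then d (i - 1) else 0 := by
      split_ifs with h'
      · have : d (i - 1) < d i := hdinc (i - 1) i (by omega) (by omega) hin
        linarith
      · linarith
    rw [← mul_div_assoc, le_div_iff₀ hdi]
    nlinarith [hkey i hi1 hik]
  have hsum := my_sum_f_le n d hd1 hdinc k hk1 hkn
  have hlogdk : Real.log (d k) ≤ Real.log (d n) := by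
    rcases eq_or_lt_of_le hkn with heq | hlt
    · rw [heq]
    · exact le_of_lt (Real.log_lt_log hdk (hdinc k n hk1 hlt le_rfl))
  have hdn : 0 < d n := hdpos n h1n le_rfl
  have hd1n : d 1 < d n := hdinc 1 n le_rfl (by omega) le_rfl
  have hL : Real.log (d n / d 1) = Real.log (d n) - Real.log (d 1) :=
    Real.log_div (ne_of_gt hdn) (ne_of_gt hd1)
  have hLnn : 0 ≤ Real.log (d n) - Real.log (d 1) :=
    sub_nonneg.2 (le_of_lt (Real.log_lt_log hd1 hd1n))
  have hlogb : Real.log (d n / d 1) ≤ Real.logb 2 (d n / d 1) := by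
    rw [Real.logb, le_div_iff₀ (Real.log_pos (by norm_num))]
    nlinarith [Real.log_two_lt_d9, hLnn, hL]
  have hfinal : 1 + Real.log (d k) - Real.log (d 1)
      ≤ 2 * (Real.logb 2 (d n / d 1) + 1) := by
    have : Real.log (d k) - Real.log (d 1) ≤ Real.logb 2 (d n / d 1) := by
      rw [hL] at hlogb; linarith
    have h0 : 0 ≤ Real.logb 2 (d n / d 1) := by rw [hL] at hlogb; linarith
    linarith
  have hsumnn : 0 ≤ ∑ i ∈ Finset.Icc 1 k,
      (d i - if 1 < i then d (i - 1) else 0) / d i := by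
    apply Finset.sum_nonneg
    intro i hi
    simp only [Finset.mem_Icc] at hi
    have hin : i ≤ n := le_trans hi.2 hkn
    have hdi : 0 < d i := hdpos i hi.1 hin
    apply div_nonneg _ (le_of_lt hdi)
    split_ifs with h'
    · have : d (i - 1) < d i := hdinc (i - 1) i (by omega) (by omega) hin
      linarith
    · linarith
  have hvdk : 0 ≤ vstar * d k := mul_nonneg (le_of_lt hv0) (le_of_lt hdk)
  rw [rev, hdemv]
  calc welfare n v d vstar
      ≤ vstar * d k * ∑ i ∈ Finset.Icc 1 k,
          (d i - if 1 < i then d (i - 1) else 0) / d i := hwel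
    _ ≤ vstar * d k * (1 + Real.log (d k) - Real.log (d 1)) :=
        mul_le_mul_of_nonneg_left hsum hvdk
    _ ≤ vstar * d k * (2 * (Real.logb 2 (d n / d 1) + 1)) :=
        mul_le_mul_of_nonneg_left hfinal hvdk
    _ = 2 * (Real.logb 2 (d n / d 1) + 1) * (vstar * d k) := by ring
end

section
/- There exists a universal constant c > 0 such that for every instance (every number n ≥ 2 of demand levels and every values and demands as above) there exists a non-trivial pure Nash equilibrium (p,q) whose revenue is at least a c/√D fraction of the optimal social welfare: √D · R(p+q) ≥ c · SW(0), where D = d_n/d_1. -/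
open scoped Classical

lemma demand_at (n : ℕ) (v d : ℕ → ℝ) (x : ℝ) (k : ℕ) (hk : k ∈ Finset.Icc 1 n)
    (hx : x ≤ v k) (hmax : ∀ i ∈ Finset.Icc 1 n, x ≤ v i → i ≤ k) :
    demand n v d x = d k := by
  have hmem : k ∈ (Finset.Icc 1 n).filter (fun i => x ≤ v i) :=
    Finset.mem_filter.2 ⟨hk, hx⟩
  have hne : ((Finset.Icc 1 n).filter (fun i => x ≤ v i)).Nonempty := ⟨k, hmem⟩
  rw [demand, dif_pos hne]
  congr 1
  apply le_antisymm
  · apply Finset.max'_le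
    intro i hi
    rcases Finset.mem_filter.1 hi with ⟨h1, h2⟩
    exact hmax i h1 h2
  · exact Finset.le_max' _ _ hmem

lemma demand_cases (n : ℕ) (v d : ℕ → ℝ) (x : ℝ) :
    demand n v d x = 0 ∨ ∃ j ∈ Finset.Icc 1 n, x ≤ v j ∧ demand n v d x = d j := by
  rw [demand]
  split
  · rename_i h
    right
    have hm := Finset.max'_mem _ h
    rcases Finset.mem_filter.1 hm with ⟨h1, h2⟩
    exact ⟨_, h1, h2, rfl⟩
  · left; rfl

lemma sqrt_mul_le (a c b e : ℝ) (ha : 0 ≤ a) (hc : 0 ≤ c) (h : a ^ 2 * b ≤ c ^ 2 * e) :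
    a * Real.sqrt b ≤ c * Real.sqrt e := by
  have := Real.sqrt_le_sqrt h
  rwa [Real.sqrt_mul (sq_nonneg a), Real.sqrt_mul (sq_nonneg c),
    Real.sqrt_sq ha, Real.sqrt_sq hc] at this

/-- There is a universal constant `c > 0` such that every instance has a
non-trivial pure Nash equilibrium whose revenue is at least a `c/√D` fraction
of the optimal social welfare. -/
theorem stmt_16 :
    ∃ c : ℝ, 0 < c ∧
      ∀ (n : ℕ) (v d : ℕ → ℝ), ValidInstance n v d →
        ∃ p q : ℝ, IsNE n v d p q ∧ p + q ≤ v 1 ∧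
          c * welfare n v d 0 ≤ Real.sqrt (d n / d 1) * rev n v d (p + q) := by
  refine ⟨1/2, by norm_num, ?_⟩
  intro n v d hV
  obtain ⟨hn, hvn, hvdec, hd1, hdinc⟩ := hV
  have hn1 : 1 ≤ n := le_trans (by norm_num) hn
  -- positivity of values and demands on [1, n]
  have hvpos : ∀ i ∈ Finset.Icc 1 n, 0 < v i := by
    intro i hi
    rcases Finset.mem_Icc.1 hi with ⟨h1, h2⟩
    rcases eq_or_lt_of_le h2 with h | h
    · rw [h]; exact hvn
    · exact lt_trans hvn (hvdec i n h1 h le_rfl)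
  have hdpos : ∀ i ∈ Finset.Icc 1 n, 0 < d i := by
    intro i hi
    rcases Finset.mem_Icc.1 hi with ⟨h1, h2⟩
    rcases eq_or_lt_of_le h1 with h | h
    · rw [← h]; exact hd1
    · exact lt_trans hd1 (hdinc 1 i le_rfl h h2)
  have h1mem : (1 : ℕ) ∈ Finset.Icc 1 n := Finset.mem_Icc.2 ⟨le_rfl, hn1⟩
  -- the maximizer of v i ^ 2 * d i
  obtain ⟨k, hkmem, hkmax⟩ :=
    (Finset.Icc 1 n).exists_max_image (fun i => v i ^ 2 * d i) ⟨1, h1mem⟩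
  rcases Finset.mem_Icc.1 hkmem with ⟨hk1, hkn⟩
  have hvk : 0 < v k := hvpos k hkmem
  have hdk : 0 < d k := hdpos k hkmem
  have hpq : v k / 2 + v k / 2 = v k := by ring
  -- demand at total price v k is d k
  have hdem : demand n v d (v k) = d k := by
    apply demand_at n v d (v k) k hkmem le_rfl
    intro i hi hvi
    by_contra hlt
    push_neg at hlt
    exact absurd hvi (not_le.2 (hvdec k i hk1 hlt (Finset.mem_Icc.1 hi).2))
  -- the best-response property
  have hbr : ∀ p', 0 ≤ p' → p' * demand n v d (p' + v k / 2) ≤ v k / 2 * d k := by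
    intro p' hp'
    rcases demand_cases n v d (p' + v k / 2) with h | ⟨j, hj, hxj, h⟩
    · rw [h, mul_zero]; positivity
    · rw [h]
      have hdj : 0 < d j := hdpos j hj
      have hvj : 0 < v j := hvpos j hj
      have hmaxj := hkmax j hj
      have hp'le : p' ≤ v j - v k / 2 := by linarith
      calc p' * d j ≤ (v j - v k / 2) * d j :=
            mul_le_mul_of_nonneg_right hp'le hdj.le
        _ ≤ v k / 2 * d k := by nlinarith [mul_nonneg hdj.le (sq_nonneg (v j - v k)), hvk, hmaxj]
  have hInBR : InBR n v d (v k / 2) (v k / 2) := by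
    refine ⟨by positivity, ?_⟩
    intro p' hp'
    rw [hpq, hdem]
    exact hbr p' hp'
  refine ⟨v k / 2, v k / 2, ⟨by positivity, by positivity, hInBR, hInBR⟩, ?_, ?_⟩
  · rw [hpq]
    rcases eq_or_lt_of_le hk1 with h | h
    · rw [← h]
    · exact (hvdec 1 k le_rfl h hkn).le
  · -- the welfare bound
    rw [hpq, rev, hdem]
    have hwf : welfare n v d 0 = ∑ i ∈ Finset.Icc 1 n,
        v i * (d i - if 1 < i then d (i - 1) else 0) := by
      rw [welfare]
      congr 1
      apply Finset.filter_true_of_mem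
      intro i hi
      exact (hvpos i hi).le
    set G : ℕ → ℝ := fun i => if i = 0 then 0 else Real.sqrt (d i) with hG
    have hterm : ∀ i ∈ Finset.Icc 1 n,
        v i * (d i - if 1 < i then d (i - 1) else 0)
          ≤ 2 * (v k * Real.sqrt (d k)) * (G i - G (i - 1)) := by
      intro i hi
      rcases Finset.mem_Icc.1 hi with ⟨hi1, hin⟩
      have hdi : 0 < d i := hdpos i hi
      have hvi : 0 < v i := hvpos i hi
      have hvisq : v i * Real.sqrt (d i) ≤ v k * Real.sqrt (d k) :=
        sqrt_mul_le _ _ _ _ hvi.le hvk.le (hkmax i hi)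
      have hsqi : Real.sqrt (d i) ^ 2 = d i := Real.sq_sqrt hdi.le
      have hsqi0 : 0 ≤ Real.sqrt (d i) := Real.sqrt_nonneg _
      rcases eq_or_lt_of_le hi1 with h1 | h1
      · -- i = 1
        rw [← h1]
        simp only [hG]
        norm_num
        have hle : v 1 * Real.sqrt (d 1) ≤ v k * Real.sqrt (d k) :=
          sqrt_mul_le (v 1) (v k) (d 1) (d k) (hvpos 1 h1mem).le hvk.le (hkmax 1 h1mem)
        nlinarith [mul_le_mul_of_nonneg_right hle (Real.sqrt_nonneg (d 1)),
          Real.sq_sqrt hd1.le,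
          mul_nonneg (mul_nonneg hvk.le (Real.sqrt_nonneg (d k))) (Real.sqrt_nonneg (d 1))]
      · -- i > 1
        have hi1' : 1 ≤ i - 1 := by omega
        have him : i - 1 ∈ Finset.Icc 1 n := Finset.mem_Icc.2 ⟨hi1', by omega⟩
        have hdim : 0 < d (i - 1) := hdpos _ him
        have hdlt : d (i - 1) < d i := hdinc (i - 1) i hi1' (by omega) hin
        have hGi : G i = Real.sqrt (d i) := by simp [hG]; omega
        have hGim : G (i - 1) = Real.sqrt (d (i - 1)) := by simp [hG]; omega
        rw [if_pos h1, hGi, hGim]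
        have hsm : Real.sqrt (d (i - 1)) ≤ Real.sqrt (d i) := Real.sqrt_le_sqrt hdlt.le
        have hsqm : Real.sqrt (d (i - 1)) ^ 2 = d (i - 1) := Real.sq_sqrt hdim.le
        nlinarith [Real.sqrt_nonneg (d (i - 1)), mul_le_mul_of_nonneg_right hvisq
          (sub_nonneg.2 hsm), sq_nonneg (Real.sqrt (d i) - Real.sqrt (d (i - 1)))]
    have htel : ∑ i ∈ Finset.Icc 1 n, (G i - G (i - 1)) = Real.sqrt (d n) := by
      rw [← Finset.Ico_add_one_right_eq_Icc, Finset.sum_Ico_eq_sum_range]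
      have : ∀ j ∈ Finset.range (n + 1 - 1), G (1 + j) - G (1 + j - 1) = G (j + 1) - G j := by
        intro j _
        congr 2 <;> omega
      rw [Finset.sum_congr rfl this, Finset.sum_range_sub G (n := n + 1 - 1)]
      have hn0 : n + 1 - 1 = n := by omega
      rw [hn0]
      simp [hG]
      omega
    have hwle : welfare n v d 0 ≤ 2 * (v k * Real.sqrt (d k)) * Real.sqrt (d n) := by
      rw [hwf, ← htel, Finset.mul_sum]
      exact Finset.sum_le_sum hterm
    -- final comparison
    have hdn : 0 < d n := hdpos n (Finset.mem_Icc.2 ⟨hn1, le_rfl⟩)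
    have hd1k : d 1 ≤ d k := by
      rcases eq_or_lt_of_le hk1 with h | h
      · rw [← h]
      · exact (hdinc 1 k le_rfl h hkn).le
    have hs1 : (0:ℝ) < Real.sqrt (d 1) := Real.sqrt_pos.2 hd1
    have hs1k : Real.sqrt (d 1) ≤ Real.sqrt (d k) := Real.sqrt_le_sqrt hd1k
    have hsqk : Real.sqrt (d k) * Real.sqrt (d k) = d k := Real.mul_self_sqrt hdk.le
    have hsplit : Real.sqrt (d n / d 1) * Real.sqrt (d 1) = Real.sqrt (d n) := by
      rw [← Real.sqrt_mul (by positivity), div_mul_cancel₀ _ (ne_of_gt hd1)]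
    have hfin : v k * Real.sqrt (d k) * Real.sqrt (d n) ≤
        Real.sqrt (d n / d 1) * (v k * d k) := by
      calc v k * Real.sqrt (d k) * Real.sqrt (d n)
          = Real.sqrt (d n / d 1) * (v k * Real.sqrt (d k)) * Real.sqrt (d 1) := by
            rw [← hsplit]; ring
        _ ≤ Real.sqrt (d n / d 1) * (v k * Real.sqrt (d k)) * Real.sqrt (d k) :=
            mul_le_mul_of_nonneg_left hs1k (by positivity)
        _ = Real.sqrt (d n / d 1) * (v k * (Real.sqrt (d k) * Real.sqrt (d k))) := by ring
        _ = Real.sqrt (d n / d 1) * (v k * d k) := by rw [hsqk]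
    calc 1 / 2 * welfare n v d 0 ≤ 1 / 2 * (2 * (v k * Real.sqrt (d k)) * Real.sqrt (d n)) := by
          linarith
      _ = v k * Real.sqrt (d k) * Real.sqrt (d n) := by ring
      _ ≤ Real.sqrt (d n / d 1) * (v k * d k) := hfin
end

section
/- Fix an integer D ≥ 3 and consider the instance with n = D demand levels given by v_1 = 1.001, v_i = 1/√(i−1) for i = 2, …, n, and d_i = i for i = 1, …, n (so the total demand is d_n/d_1 = D). Then: every non-trivial pure Nash equilibrium (p,q) has total price p+q ∈ {v_1, v_2, v_3}, hence R(p+q) ≤ 3/√2 and SW(p+q) ≤ v_1 + v_2 + v_3 < 3; the optimal welfare satisfies SW(0) ≥ √D; and the monopolist revenue satisfies R(v_n) = D/√(D−1), so sup_{x≥0} R(x) ≥ D/√(D−1). In particular the optimal welfare and the monopolist revenue are at least a factor Ω(√D) larger than the welfare and revenue of any (hence of the best) equilibrium. -/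
open scoped Classical

section helpers
variable (D : ℕ) (hD : 3 ≤ D) (v d : ℕ → ℝ)
    (hv1 : v 1 = 1.001)
    (hv : ∀ i : ℕ, 2 ≤ i → i ≤ D → v i = 1 / Real.sqrt ((i : ℝ) - 1))
    (hd : ∀ i : ℕ, 1 ≤ i → i ≤ D → d i = (i : ℝ))

set_option linter.unusedSectionVars false

include hD hv1 hv in
lemma aux_vpos : ∀ i, 1 ≤ i → i ≤ D → 0 < v i := by
  intro i h1 h2
  rcases eq_or_lt_of_le h1 with h | h
  · rw [← h, hv1]; norm_num
  · rw [hv i h h2]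
    have : (0:ℝ) < Real.sqrt ((i:ℝ) - 1) := by
      apply Real.sqrt_pos.2
      have : (2:ℝ) ≤ (i:ℝ) := by exact_mod_cast h
      linarith
    positivity

include hD hv1 hv in
lemma aux_vmono : ∀ i j, 1 ≤ i → i < j → j ≤ D → v j < v i := by
  intro i j h1 hij hjD
  have hj2 : 2 ≤ j := by omega
  have hvj : v j = 1 / Real.sqrt ((j:ℝ) - 1) := hv j hj2 hjD
  have hjc : (1:ℝ) ≤ (j:ℝ) - 1 := by
    have : (2:ℝ) ≤ (j:ℝ) := by exact_mod_cast hj2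
    linarith
  rcases eq_or_lt_of_le h1 with h | h
  · rw [← h, hv1, hvj]
    have h1le : (1:ℝ) ≤ Real.sqrt ((j:ℝ) - 1) := by
      have hs := Real.sq_sqrt (show (0:ℝ) ≤ (j:ℝ) - 1 by linarith)
      nlinarith [Real.sqrt_nonneg ((j:ℝ) - 1)]
    have : 1 / Real.sqrt ((j:ℝ) - 1) ≤ 1 := by
      rw [div_le_one (by linarith)]; exact h1le
    linarith [this]
  · rw [hvj, hv i h (by omega)]
    have hic : (1:ℝ) ≤ (i:ℝ) - 1 := by
      have : (2:ℝ) ≤ (i:ℝ) := by exact_mod_cast h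
      linarith
    have hlt : Real.sqrt ((i:ℝ) - 1) < Real.sqrt ((j:ℝ) - 1) := by
      apply Real.sqrt_lt_sqrt (by linarith)
      have : (i:ℝ) < (j:ℝ) := by exact_mod_cast hij
      linarith
    have hpos : 0 < Real.sqrt ((i:ℝ) - 1) := by
      apply Real.sqrt_pos.2; linarith
    exact one_div_lt_one_div_of_lt hpos hlt

include hD hv1 hv in
lemma aux_filter_eq (j : ℕ) (h1 : 1 ≤ j) (h2 : j ≤ D) :
    (Finset.Icc 1 D).filter (fun i => v j ≤ v i) = Finset.Icc 1 j := by
  ext i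
  simp only [Finset.mem_filter, Finset.mem_Icc]
  constructor
  · rintro ⟨⟨hi1, hiD⟩, hle⟩
    refine ⟨hi1, ?_⟩
    by_contra hc
    push_neg at hc
    exact absurd hle (not_le.2 (aux_vmono D hD v hv1 hv j i h1 hc hiD))
  · rintro ⟨hi1, hij⟩
    refine ⟨⟨hi1, le_trans hij h2⟩, ?_⟩
    rcases eq_or_lt_of_le hij with h | h
    · rw [h]
    · exact le_of_lt (aux_vmono D hD v hv1 hv i j hi1 h h2)

include hD hv1 hv in
lemma aux_demand_at_v (j : ℕ) (h1 : 1 ≤ j) (h2 : j ≤ D) :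
    demand D v d (v j) = d j := by
  have hfe := aux_filter_eq D hD v hv1 hv j h1 h2
  have hne : ((Finset.Icc 1 D).filter (fun i => v j ≤ v i)).Nonempty := by
    rw [hfe]; exact ⟨j, by simp [h1]⟩
  rw [demand, dif_pos hne]
  congr 1
  apply le_antisymm
  · apply Finset.max'_le
    intro y hy
    rw [hfe] at hy
    exact (Finset.mem_Icc.1 hy).2
  · apply Finset.le_max'
    rw [hfe]; exact Finset.mem_Icc.2 ⟨h1, le_refl j⟩

include hd in
lemma aux_welfare_eq (x : ℝ) (k : ℕ) (hk : k ≤ D)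
    (hfe : (Finset.Icc 1 D).filter (fun i => x ≤ v i) = Finset.Icc 1 k) :
    welfare D v d x = ∑ i ∈ Finset.Icc 1 k, v i := by
  rw [welfare, hfe]
  apply Finset.sum_congr rfl
  intro i hi
  rw [Finset.mem_Icc] at hi
  rcases Nat.lt_or_ge i 2 with h | h
  · have : i = 1 := by omega
    subst this
    rw [if_neg (by omega), hd 1 le_rfl (by omega)]
    norm_num
  · rw [if_pos (by omega), hd i (by omega) (by omega), hd (i-1) (by omega) (by omega)]
    have : ((i - 1 : ℕ) : ℝ) = (i : ℝ) - 1 := by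
      push_cast [Nat.cast_sub (by omega : 1 ≤ i)]; ring
    rw [this]; ring

include hD hv1 hv in
lemma aux_sum_v_ge (m : ℕ) (hm : 2 ≤ m) (hmD : m ≤ D) :
    Real.sqrt (m : ℝ) ≤ ∑ i ∈ Finset.Icc 1 m, v i := by
  induction m, hm using Nat.le_induction with
  | base =>
    have : Finset.Icc 1 2 = {1, 2} := by decide
    rw [this]
    rw [Finset.sum_insert (by decide), Finset.sum_singleton]
    rw [hv1, hv 2 le_rfl (by omega)]
    norm_num
    have hs := Real.sq_sqrt (show (0:ℝ) ≤ 2 by norm_num)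
    nlinarith [Real.sqrt_nonneg (2:ℝ)]
  | succ m hm ih =>
    have hmD' : m ≤ D := by omega
    have IH := ih hmD'
    rw [Finset.sum_Icc_succ_top (by omega : 1 ≤ m + 1)]
    have hvm : v (m + 1) = 1 / Real.sqrt (m : ℝ) := by
      rw [hv (m+1) (by omega) hmD]
      push_cast; ring_nf
    rw [hvm]
    set s := Real.sqrt (m : ℝ) with hsdef
    have hs2 : s ^ 2 = (m : ℝ) := Real.sq_sqrt (by positivity)
    have hspos : 0 < s := Real.sqrt_pos.2 (by positivity)
    have key : Real.sqrt ((m : ℝ) + 1) ≤ s + 1 / s := by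
      have h1 : ((m:ℝ) + 1) ≤ (s + 1/s)^2 := by
        have hc : s * (1/s) = 1 := by field_simp
        nlinarith [sq_nonneg (1/s)]
      calc Real.sqrt ((m : ℝ) + 1) ≤ Real.sqrt ((s + 1/s)^2) := Real.sqrt_le_sqrt h1
        _ = s + 1/s := Real.sqrt_sq (by positivity)
    push_cast
    linarith

include hD hv1 hv hd in
set_option maxHeartbeats 800000 in
lemma aux_main_ne (p q : ℝ) (hne : IsNE D v d p q) (hle : p + q ≤ v 1) :
    p + q = v 1 ∨ p + q = v 2 := by
  have vpos := aux_vpos D hD v hv1 hv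
  have vmono := aux_vmono D hD v hv1 hv
  have demand_at_v := aux_demand_at_v D hD v d hv1 hv
  obtain ⟨hp0, hq0, ⟨-, hbrp⟩, ⟨-, hbrq⟩⟩ := hne
  have hd1 : d 1 = 1 := by rw [hd 1 le_rfl (by omega)]; norm_num
  -- step A : p + q > 0
  have htpos : 0 < p + q := by
    rcases lt_or_eq_of_le (by positivity : (0:ℝ) ≤ p + q) with h | h
    · exact h
    have hp : p = 0 := by linarith
    have hq : q = 0 := by linarith
    have hbr := hbrp (v 1) (le_of_lt (vpos 1 le_rfl (by omega)))
    rw [hp, hq, add_zero, add_zero, demand_at_v 1 le_rfl (by omega), hd1] at hbr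
    have := vpos 1 le_rfl (by omega)
    nlinarith
  -- the maximal index covered by the total price
  set S := (Finset.Icc 1 D).filter (fun i => p + q ≤ v i) with hS
  have h1S : (1 : ℕ) ∈ S := by
    rw [hS, Finset.mem_filter, Finset.mem_Icc]
    exact ⟨⟨le_rfl, by omega⟩, hle⟩
  have hSne : S.Nonempty := ⟨1, h1S⟩
  set k := S.max' hSne with hk
  have hkmem : k ∈ S := S.max'_mem hSne
  have hk1 : 1 ≤ k := by
    have := (Finset.mem_Icc.1 (Finset.mem_filter.1 hkmem).1).1; exact this
  have hkD : k ≤ D := (Finset.mem_Icc.1 (Finset.mem_filter.1 hkmem).1).2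
  have htk : p + q ≤ v k := (Finset.mem_filter.1 hkmem).2
  have hdemt : demand D v d (p + q) = d k := by
    rw [demand, dif_pos]
  have hdk : d k = (k : ℝ) := hd k hk1 hkD
  clear_value k
  have hdkpos : 0 < d k := by rw [hdk]; exact_mod_cast hk1
  -- step C : p + q = v k
  have hteq : p + q = v k := by
    by_contra hc
    have hlt : p + q < v k := lt_of_le_of_ne htk hc
    rcases lt_or_ge 0 p with hp | hp
    · have hbr := hbrp (p + (v k - (p + q))) (by linarith)
      rw [show p + (v k - (p + q)) + q = v k by ring,
        demand_at_v k hk1 hkD, hdemt] at hbr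
      nlinarith
    · have hq : 0 < q := by linarith
      have hbr := hbrq (q + (v k - (p + q))) (by linarith)
      rw [show q + (v k - (p + q)) + p = v k by ring,
        demand_at_v k hk1 hkD, add_comm q p, hdemt] at hbr
      nlinarith
  -- step D : k ≤ 2
  have hk2 : k ≤ 2 := by
    by_contra hc
    push_neg at hc
    have hk3 : 3 ≤ k := hc
    set j := k - 1 with hj
    have hj2 : 2 ≤ j := by omega
    have hjk : j < k := by omega
    have hjD : j ≤ D := by omega
    have hdj : d j = (j : ℝ) := hd j (by omega) hjD
    have hΔ : 0 < v j - v k := by linarith [vmono j k (by omega) hjk hkD]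
    have hbp := hbrp (p + (v j - v k)) (by linarith)
    rw [show p + (v j - v k) + q = v j by linarith [hteq],
      demand_at_v j (by omega) hjD, hdemt, hdj, hdk] at hbp
    have hbq := hbrq (q + (v j - v k)) (by linarith)
    rw [show q + (v j - v k) + p = v j by linarith [hteq],
      demand_at_v j (by omega) hjD, add_comm q p, hdemt, hdj, hdk] at hbq
    -- sum the two inequalities
    have hsum : (v k + 2 * (v j - v k)) * (j : ℝ) ≤ v k * (k : ℝ) := by
      rw [← hteq]; nlinarith [hbp, hbq]
    -- now plug in the explicit values
    have hkc : (3:ℝ) ≤ (k:ℝ) := by exact_mod_cast hk3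
    have hjc : (j : ℝ) = (k : ℝ) - 1 := by
      rw [hj]; push_cast [Nat.cast_sub (by omega : 1 ≤ k)]; ring
    set a := Real.sqrt ((k:ℝ) - 2) with hadef
    set b := Real.sqrt ((k:ℝ) - 1) with hbdef
    have ha2 : a ^ 2 = (k:ℝ) - 2 := Real.sq_sqrt (by linarith)
    have hb2 : b ^ 2 = (k:ℝ) - 1 := Real.sq_sqrt (by linarith)
    have ha : 0 < a := Real.sqrt_pos.2 (by linarith)
    have hb : 0 < b := Real.sqrt_pos.2 (by linarith)
    have hvk : v k = 1 / b := by rw [hv k (by omega) hkD]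
    have hvj : v j = 1 / a := by
      rw [hv j hj2 hjD, hadef, hjc, show (k:ℝ) - 1 - 1 = (k:ℝ) - 2 from by ring]
    rw [hvk, hvj, hjc, ← hb2] at hsum
    have hkb : (k : ℝ) = b ^ 2 + 1 := by linarith
    rw [hkb] at hsum
    -- hsum : (1/b + 2*(1/a - 1/b)) * b^2 ≤ (1/b) * (b^2+1)
    have key : 2 * b ^ 3 ≤ 2 * a * b ^ 2 + a := by
      have h := mul_le_mul_of_nonneg_right hsum (show (0:ℝ) ≤ a * b by positivity)
      have e1 : (1/b + 2*(1/a - 1/b)) * b^2 * (a*b) = 2*b^3 + a*b^2 - 2*a*b^2 := by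
        field_simp; ring
      have e2 : 1/b * (b^2+1) * (a*b) = a*b^2 + a := by field_simp
      rw [e1, e2] at h; linarith
    have ha2' : a ^ 2 = b ^ 2 - 1 := by linarith
    have hsq : (2*b^3)^2 ≤ (2*a*b^2+a)^2 :=
      pow_le_pow_left₀ (by positivity) key 2
    have e3 : (2*a*b^2+a)^2 = a^2*(2*b^2+1)^2 := by ring
    rw [e3, ha2'] at hsq
    nlinarith [hsq, sq_nonneg b]
  -- conclude
  have : k = 1 ∨ k = 2 := by omega
  rcases this with h | h
  · left; rw [hteq, h]
  · right; rw [hteq, h]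

end helpers

/-- In the instance with `n = D` levels, `v₁ = 1.001`, `vᵢ = 1/√(i-1)` and
`dᵢ = i`: every non-trivial equilibrium has total price `v₁`, `v₂` or `v₃`,
hence revenue at most `3/√2` and welfare at most `v₁ + v₂ + v₃ < 3`, while
the optimal welfare is at least `√D` and the monopolist revenue is at least
`R(v_D) = D/√(D-1)`. -/
theorem stmt_19 (D : ℕ) (hD : 3 ≤ D) (v d : ℕ → ℝ)
    (hv1 : v 1 = 1.001)
    (hv : ∀ i : ℕ, 2 ≤ i → i ≤ D → v i = 1 / Real.sqrt ((i : ℝ) - 1))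
    (hd : ∀ i : ℕ, 1 ≤ i → i ≤ D → d i = (i : ℝ)) :
    (∀ p q : ℝ, IsNE D v d p q → p + q ≤ v 1 →
      (p + q = v 1 ∨ p + q = v 2 ∨ p + q = v 3) ∧
      rev D v d (p + q) ≤ 3 / Real.sqrt 2 ∧
      welfare D v d (p + q) ≤ v 1 + v 2 + v 3 ∧ v 1 + v 2 + v 3 < 3) ∧
    Real.sqrt (D : ℝ) ≤ welfare D v d 0 ∧
    rev D v d (v D) = (D : ℝ) / Real.sqrt ((D : ℝ) - 1) := by
  have vpos := aux_vpos D hD v hv1 hv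
  have hs2 : Real.sqrt 2 ^ 2 = 2 := Real.sq_sqrt (by norm_num)
  have hs2n : (0:ℝ) ≤ Real.sqrt 2 := Real.sqrt_nonneg 2
  have h14 : (1.4:ℝ) ≤ Real.sqrt 2 := by nlinarith
  have h15 : Real.sqrt 2 ≤ 1.5 := by nlinarith
  have hs2pos : (0:ℝ) < Real.sqrt 2 := by linarith
  have hv2 : v 2 = 1 := by
    rw [hv 2 le_rfl (by omega)]
    norm_num
  have hv3 : v 3 = 1 / Real.sqrt 2 := by
    rw [hv 3 (by omega) hD]; norm_num
  have hv3' : 1 / Real.sqrt 2 < 0.999 := by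
    rw [div_lt_iff₀ hs2pos]; nlinarith
  have hrev23 : (2:ℝ) ≤ 3 / Real.sqrt 2 := by
    rw [le_div_iff₀ hs2pos]; nlinarith
  refine ⟨?_, ?_, ?_⟩
  · intro p q hne hle
    have hmain := aux_main_ne D hD v d hv1 hv hd p q hne hle
    have hsum3 : v 1 + v 2 + v 3 < 3 := by
      have h' := hv3'
      rw [one_div] at h'
      rw [hv1, hv2, hv3, one_div]; norm_num; linarith
    refine ⟨?_, ?_, ?_, hsum3⟩
    · rcases hmain with h | h
      · exact Or.inl h
      · exact Or.inr (Or.inl h)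
    · rcases hmain with h | h
      · rw [h, rev, aux_demand_at_v D hD v d hv1 hv 1 le_rfl (by omega),
          hd 1 le_rfl (by omega), hv1]
        norm_num
        linarith
      · rw [h, rev, aux_demand_at_v D hD v d hv1 hv 2 (by omega) (by omega),
          hd 2 (by omega) (by omega), hv2]
        norm_num
        linarith
    · rcases hmain with h | h
      · rw [h, aux_welfare_eq D v d hd (v 1) 1 (by omega)
            (aux_filter_eq D hD v hv1 hv 1 le_rfl (by omega))]
        have h2 := vpos 2 (by omega) (by omega)
        have h3 := vpos 3 (by omega) hD
        simp only [Finset.Icc_self, Finset.sum_singleton]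
        linarith
      · rw [h, aux_welfare_eq D v d hd (v 2) 2 (by omega)
            (aux_filter_eq D hD v hv1 hv 2 (by omega) (by omega))]
        have h3 := vpos 3 (by omega) hD
        rw [show Finset.Icc 1 2 = {1, 2} from by decide,
          Finset.sum_insert (by decide), Finset.sum_singleton]
        linarith
  · have hfe0 : (Finset.Icc 1 D).filter (fun i => (0:ℝ) ≤ v i) = Finset.Icc 1 D := by
      ext i
      simp only [Finset.mem_filter, Finset.mem_Icc]
      constructor
      · rintro ⟨h, -⟩; exact h
      · intro h; exact ⟨h, le_of_lt (vpos i h.1 h.2)⟩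
    rw [aux_welfare_eq D v d hd 0 D le_rfl hfe0]
    exact aux_sum_v_ge D hD v hv1 hv D (by omega) le_rfl
  · rw [rev, aux_demand_at_v D hD v d hv1 hv D (by omega) le_rfl,
      hd D (by omega) le_rfl, hv D (by omega) le_rfl]
    ring
end
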